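/- arXiv:2402.12209 — 4 statements merged into one kernel-verified Lean document; each statement's English description precedes it below -/
import Mathlib

section
/- Let n ≥ 2 and Q ∈ SU_n. Then there exists X ∈ su_n with exp(X) = Q such that ‖X‖_φ² ≤ ‖Y‖_φ² for every Y ∈ su_n with exp(Y) = Q; that is, the infimum m(Q) := inf{ ‖X‖_φ² : X ∈ su_n, exp(X) = Q } is attained, and in particular the set Θ(Q) := { X ∈ su_n : exp(X) = Q and ‖X‖_φ² = m(Q) } is nonempty. -/
noncomputable section

open scoped Real Matrix
open Matrix

/-- The special unitary group `SU_n` as a set of matrices: `Q Qᴴ = 1` and `det Q = 1`. -/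
def SpecialUnitary (n : ℕ) : Set (Matrix (Fin n) (Fin n) ℂ) :=
  {Q | Q * Qᴴ = 1 ∧ Q.det = 1}

/-- The Lie algebra `su_n`: skew-hermitian traceless matrices. -/
def suSet (n : ℕ) : Set (Matrix (Fin n) (Fin n) ℂ) :=
  {X | Xᴴ = -X ∧ Matrix.trace X = 0}

/-- The squared Frobenius norm `‖X‖_φ² = trace (X Xᴴ)` (a real number). -/
def frobSq {n : ℕ} (X : Matrix (Fin n) (Fin n) ℂ) : ℝ :=
  (Matrix.trace (X * Xᴴ)).re

/-- `m(Q) = inf { ‖X‖_φ² : X ∈ su_n, exp X = Q }`. -/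
def mQ {n : ℕ} (Q : Matrix (Fin n) (Fin n) ℂ) : ℝ :=
  sInf {r : ℝ | ∃ X ∈ suSet n, NormedSpace.exp X = Q ∧ frobSq X = r}

/-- `Θ(Q)`: the set of minimizing `su_n`-logarithms of `Q`. -/
def ThetaQ {n : ℕ} (Q : Matrix (Fin n) (Fin n) ℂ) : Set (Matrix (Fin n) (Fin n) ℂ) :=
  {X | X ∈ suSet n ∧ NormedSpace.exp X = Q ∧ frobSq X = mQ Q}

/-- `su_n`-plog(Q): generalized principal `su_n`-logarithms of `Q`, i.e. `su_n`-logarithms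
all of whose eigenvalues (roots of the characteristic polynomial) have imaginary part
in `[-π, π]`. -/
def plog {n : ℕ} (Q : Matrix (Fin n) (Fin n) ℂ) : Set (Matrix (Fin n) (Fin n) ℂ) :=
  {X | X ∈ suSet n ∧ NormedSpace.exp X = Q ∧
    ∀ lam ∈ X.charpoly.roots, -π ≤ lam.im ∧ lam.im ≤ π}

section LogExists
open scoped Matrix.Norms.L2Operator

abbrev matCStar (n : ℕ) : CStarAlgebra (Matrix (Fin n) (Fin n) ℂ) := inferInstance
attribute [local instance] matCStar

lemma exists_suLog {n : ℕ} (hn : 2 ≤ n) (Q : Matrix (Fin n) (Fin n) ℂ)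
    (hQ1 : Q * Qᴴ = 1) (hQdet : Q.det = 1) :
    ∃ X : Matrix (Fin n) (Fin n) ℂ, Xᴴ = -X ∧ Matrix.trace X = 0 ∧ NormedSpace.exp X = Q := by
  have hQ1' : Qᴴ * Q = 1 := mul_eq_one_comm.mp hQ1
  have hQu : Q ∈ unitary (Matrix (Fin n) (Fin n) ℂ) := ⟨hQ1', hQ1⟩
  haveI hQn : IsStarNormal Q := ⟨by rw [Commute, SemiconjBy]; show Qᴴ * Q = Q * Qᴴ; rw [hQ1, hQ1']⟩
  have hsp : ∀ z ∈ spectrum ℂ Q, ‖z‖ = 1 := fun z hz =>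
    spectrum.norm_eq_one_of_unitary hQu hz
  have hdisc : ∀ (f : ℂ → ℂ), ContinuousOn f (spectrum ℂ Q) := fun f => by
    haveI := Q.finite_spectrum.to_subtype
    rw [continuousOn_iff_continuous_restrict]
    exact continuous_of_discreteTopology
  set H : Matrix (Fin n) (Fin n) ℂ := cfc (fun z : ℂ => (z.arg : ℂ)) Q with hHdef
  have hHsa : _root_.IsSelfAdjoint H := by
    rw [_root_.IsSelfAdjoint, hHdef, ← cfc_star]
    exact cfc_congr fun z _ => by simp [Complex.conj_ofReal]
  -- Q = exp (I • H)
  have hIH : Complex.I • H = cfc (fun z : ℂ => Complex.I * (z.arg : ℂ)) Q := by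
    rw [hHdef, ← cfc_const_mul Complex.I _ Q (hdisc _)]
  have hQexp : NormedSpace.exp (Complex.I • H) = Q := by
    rw [hIH, ← CFC.complex_exp_eq_normedSpace_exp (cfc_predicate _ Q),
      ← cfc_comp Complex.exp _ Q hQn Complex.continuous_exp.continuousOn (hdisc _)]
    calc cfc (Complex.exp ∘ fun z : ℂ => Complex.I * (z.arg : ℂ)) Q
        = cfc (id : ℂ → ℂ) Q := by
          apply cfc_congr
          intro z hz
          have h2 := Complex.norm_mul_exp_arg_mul_I z
          rw [hsp z hz, Complex.ofReal_one, one_mul] at h2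
          simpa [Function.comp, mul_comm] using h2
      _ = Q := cfc_id ℂ Q
  have hH : H.IsHermitian := hHsa
  set U : Matrix (Fin n) (Fin n) ℂ := (Matrix.IsHermitian.eigenvectorUnitary hH : Matrix (Fin n) (Fin n) ℂ) with hUdef
  set θ : Fin n → ℝ := hH.eigenvalues with hθdef
  have hU1 : star U * U = 1 := Unitary.star_mul_self_of_mem (Matrix.IsHermitian.eigenvectorUnitary hH).2
  have hU2 : U * star U = 1 := Unitary.mul_star_self_of_mem (Matrix.IsHermitian.eigenvectorUnitary hH).2
  have hUunit : IsUnit U := ⟨⟨U, star U, hU2, hU1⟩, rfl⟩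
  have hUinv : U⁻¹ = star U := Matrix.inv_eq_right_inv hU2
  have hspec : H = U * Matrix.diagonal (RCLike.ofReal ∘ θ) * star U := hH.spectral_theorem
  -- conjugation lemma
  have hconj : ∀ v : Fin n → ℂ, NormedSpace.exp (U * Matrix.diagonal v * star U)
      = U * Matrix.diagonal (fun j => Complex.exp (v j)) * star U := by
    intro v
    rw [← hUinv, Matrix.exp_conj U (Matrix.diagonal v) hUunit, Matrix.exp_diagonal,
      Pi.exp_def]
    simp [Complex.exp_eq_exp_ℂ]
  have hQdiag : Q = U * Matrix.diagonal (fun j => Complex.exp (Complex.I * (θ j : ℂ))) * star U := by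
    have h3 : Complex.I • H = U * Matrix.diagonal (fun j => Complex.I * (θ j : ℂ)) * star U := by
      rw [hspec]
      rw [show Complex.I • (U * Matrix.diagonal (RCLike.ofReal ∘ θ) * star U)
          = U * (Complex.I • Matrix.diagonal (RCLike.ofReal ∘ θ)) * star U by
        simp [smul_mul_assoc, mul_smul_comm], ← Matrix.diagonal_smul]
      congr 1
    rw [← hQexp, h3, hconj]
  -- determinant
  have hdet : Complex.exp (∑ j, Complex.I * (θ j : ℂ)) = 1 := by
    have h4 := congrArg Matrix.det hQdiag
    rw [hQdet, Matrix.det_mul, Matrix.det_mul, Matrix.det_diagonal] at h4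
    have h5 : U.det * (star U).det = 1 := by rw [← Matrix.det_mul, hU2, Matrix.det_one]
    rw [Complex.exp_sum]
    rw [mul_right_comm, h5, one_mul] at h4
    exact h4.symm
  -- the sum of eigenvalue angles is a multiple of 2π
  obtain ⟨k, hk⟩ := Complex.exp_eq_one_iff.mp hdet
  have hsum : ∑ j, θ j = 2 * π * k := by
    have h7 : Complex.I * ((∑ j, θ j : ℝ) : ℂ) = Complex.I * ((2 * π * (k : ℝ) : ℝ) : ℂ) := by
      rw [← Finset.mul_sum] at hk
      push_cast
      rw [hk]; ring
    exact_mod_cast mul_left_cancel₀ Complex.I_ne_zero h7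
  -- adjusted angles
  set j₀ : Fin n := ⟨0, by omega⟩ with hj₀
  set θ' : Fin n → ℝ := fun j => θ j - (if j = j₀ then 2 * π * (k : ℝ) else 0) with hθ'
  have hstar : (star fun j => Complex.I * (θ' j : ℂ)) = fun j => -(Complex.I * (θ' j : ℂ)) := by
    funext j
    simp [Pi.star_apply, Complex.conj_ofReal, neg_mul]
  refine ⟨U * Matrix.diagonal (fun j => Complex.I * (θ' j : ℂ)) * star U, ?_, ?_, ?_⟩
  · -- skew-hermitian
    have h8 : (Matrix.diagonal (fun j => Complex.I * (θ' j : ℂ)))ᴴ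
        = -Matrix.diagonal (fun j => Complex.I * (θ' j : ℂ)) := by
      rw [Matrix.diagonal_conjTranspose, hstar, Matrix.diagonal_neg]
    calc (U * Matrix.diagonal (fun j => Complex.I * (θ' j : ℂ)) * star U)ᴴ
        = U * (Matrix.diagonal (fun j => Complex.I * (θ' j : ℂ)))ᴴ * star U := by
          simp [Matrix.conjTranspose_mul, Matrix.mul_assoc, Matrix.star_eq_conjTranspose,
            Matrix.conjTranspose_conjTranspose]
      _ = -(U * Matrix.diagonal (fun j => Complex.I * (θ' j : ℂ)) * star U) := by
          rw [h8, Matrix.mul_neg, Matrix.neg_mul]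
  · -- traceless
    rw [Matrix.trace_mul_comm, ← Matrix.mul_assoc, hU1, Matrix.one_mul, Matrix.trace_diagonal]
    have h9 : ∑ j, θ' j = 0 := by
      rw [hθ']
      rw [Finset.sum_sub_distrib, hsum, Finset.sum_ite_eq' Finset.univ j₀ (fun _ => 2 * π * (k : ℝ))]
      simp
    calc ∑ j, Complex.I * (θ' j : ℂ) = Complex.I * ((∑ j, θ' j : ℝ) : ℂ) := by
          push_cast; rw [Finset.mul_sum]
      _ = 0 := by rw [h9]; simp
  · -- exponential
    have hfun : (fun j => Complex.exp (Complex.I * (θ' j : ℂ)))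
        = fun j => Complex.exp (Complex.I * (θ j : ℂ)) := by
      funext j
      by_cases hj : j = j₀
      · subst hj
        simp only [hθ', if_pos rfl]
        push_cast
        rw [mul_sub, Complex.exp_sub]
        rw [show Complex.I * (2 * (π : ℂ) * (k : ℂ)) = (k : ℂ) * (2 * (π : ℂ) * Complex.I) by ring]
        rw [Complex.exp_int_mul_two_pi_mul_I, div_one]
      · simp only [hθ', if_neg hj, sub_zero]
    rw [hconj, hfun, ← hQdiag]



open scoped Matrix.Norms.L2Operator in
lemma expContinuous {n : ℕ} :
    Continuous (NormedSpace.exp : Matrix (Fin n) (Fin n) ℂ → Matrix (Fin n) (Fin n) ℂ) :=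
  letI := matCStar n
  letI : NormedAlgebra ℚ (Matrix (Fin n) (Fin n) ℂ) := NormedAlgebra.restrictScalars ℚ ℂ _
  NormedSpace.exp_continuous

end LogExists

section MinPart

lemma frobSq_eq {n : ℕ} (X : Matrix (Fin n) (Fin n) ℂ) :
    frobSq X = ∑ i, ∑ j, Complex.normSq (X i j) := by
  unfold frobSq
  rw [Matrix.trace]
  rw [Complex.re_sum]
  congr 1
  funext i
  simp only [Matrix.diag_apply, Matrix.mul_apply, Matrix.conjTranspose_apply]
  rw [Complex.re_sum]
  congr 1
  funext j

  rw [show star (X i j) = (starRingEnd ℂ) (X i j) from rfl, Complex.mul_conj, Complex.ofReal_re]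

lemma frobSq_nonneg {n : ℕ} (X : Matrix (Fin n) (Fin n) ℂ) : 0 ≤ frobSq X := by
  rw [frobSq_eq]
  exact Finset.sum_nonneg fun i _ => Finset.sum_nonneg fun j _ => Complex.normSq_nonneg _

lemma frobSq_entry_le {n : ℕ} (X : Matrix (Fin n) (Fin n) ℂ) (i j : Fin n) :
    ‖X i j‖ ^ 2 ≤ frobSq X := by
  rw [frobSq_eq]
  have h1 : Complex.normSq (X i j) ≤ ∑ j', Complex.normSq (X i j') :=
    Finset.single_le_sum (fun _ _ => Complex.normSq_nonneg _) (Finset.mem_univ j)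
  have h2 : (∑ j', Complex.normSq (X i j')) ≤ ∑ i', ∑ j', Complex.normSq (X i' j') :=
    Finset.single_le_sum (f := fun i' => ∑ j', Complex.normSq (X i' j'))
      (fun _ _ => Finset.sum_nonneg fun _ _ => Complex.normSq_nonneg _) (Finset.mem_univ i)
  have h3 : ‖X i j‖ ^ 2 = Complex.normSq (X i j) := by
    rw [Complex.normSq_eq_norm_sq]
  linarith

lemma frobSq_continuous {n : ℕ} : Continuous (frobSq (n := n)) := by
  have h : (frobSq (n := n)) = fun X => ∑ i, ∑ j, Complex.normSq (X i j) :=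
    funext frobSq_eq
  rw [h]
  exact continuous_finset_sum _ fun i _ => continuous_finset_sum _ fun j _ =>
    Complex.continuous_normSq.comp ((continuous_apply j).comp (continuous_apply i))

lemma isCompact_box {n : ℕ} (R : ℝ) :
    IsCompact {X : Matrix (Fin n) (Fin n) ℂ | ∀ i j, ‖X i j‖ ≤ R} := by
  have h : {X : Matrix (Fin n) (Fin n) ℂ | ∀ i j, ‖X i j‖ ≤ R}
      = Set.univ.pi fun _ : Fin n => Set.univ.pi fun _ : Fin n => Metric.closedBall (0:ℂ) R := by
    ext X
    constructor
    · intro hX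
      exact fun i _ => fun j _ => by
        simpa [Metric.mem_closedBall, dist_zero_right] using hX i j
    · intro hX i j
      have := hX i (Set.mem_univ i) j (Set.mem_univ j)
      simpa [Metric.mem_closedBall, dist_zero_right] using this
  rw [h]
  exact isCompact_univ_pi fun i => isCompact_univ_pi fun j => isCompact_closedBall _ _

end MinPart

/-- the infimum `m(Q)` is attained; in particular `Θ(Q) ≠ ∅`. -/
theorem stmt_2 (n : ℕ) (hn : 2 ≤ n) (Q : Matrix (Fin n) (Fin n) ℂ)
    (hQ : Q ∈ SpecialUnitary n) :
    (∃ X ∈ suSet n, NormedSpace.exp X = Q ∧ frobSq X = mQ Q ∧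
      ∀ Y ∈ suSet n, NormedSpace.exp Y = Q → frobSq X ≤ frobSq Y)
    ∧ (ThetaQ Q).Nonempty := by
  obtain ⟨hQ1, hQdet⟩ := hQ
  obtain ⟨X₀, hX₀skew, hX₀tr, hX₀exp⟩ := exists_suLog hn Q hQ1 hQdet
  set c := frobSq X₀ with hc
  set S : Set (Matrix (Fin n) (Fin n) ℂ) :=
    {Y | (Yᴴ = -Y ∧ Matrix.trace Y = 0 ∧ NormedSpace.exp Y = Q) ∧ frobSq Y ≤ c} with hS
  have hSne : S.Nonempty := ⟨X₀, ⟨hX₀skew, hX₀tr, hX₀exp⟩, le_refl c⟩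
  have hSclosed : IsClosed S := by
    refine IsClosed.inter (IsClosed.inter ?_ (IsClosed.inter ?_ ?_)) ?_
    · exact isClosed_eq continuous_id.matrix_conjTranspose continuous_neg
    · exact isClosed_eq (continuous_id.matrix_trace) continuous_const
    · exact isClosed_eq expContinuous continuous_const
    · exact isClosed_le frobSq_continuous continuous_const
  have hSsub : S ⊆ {X : Matrix (Fin n) (Fin n) ℂ | ∀ i j, ‖X i j‖ ≤ Real.sqrt c} := by
    intro Y hY i j
    have h1 : ‖Y i j‖ ^ 2 ≤ frobSq Y := frobSq_entry_le Y i j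
    have h2 : frobSq Y ≤ c := hY.2
    calc ‖Y i j‖ = Real.sqrt (‖Y i j‖ ^ 2) := (Real.sqrt_sq (norm_nonneg _)).symm
      _ ≤ Real.sqrt c := Real.sqrt_le_sqrt (le_trans h1 h2)
  have hScompact : IsCompact S := (isCompact_box (Real.sqrt c)).of_isClosed_subset hSclosed hSsub
  obtain ⟨X, hXS, hXmin⟩ := hScompact.exists_isMinOn hSne frobSq_continuous.continuousOn
  have hXminS : ∀ Y ∈ S, frobSq X ≤ frobSq Y := fun Y hY => (isMinOn_iff.mp hXmin) Y hY
  have hglob : ∀ Y ∈ suSet n, NormedSpace.exp Y = Q → frobSq X ≤ frobSq Y := by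
    intro Y hY hYexp
    by_cases hYc : frobSq Y ≤ c
    · exact hXminS Y ⟨⟨hY.1, hY.2, hYexp⟩, hYc⟩
    · calc frobSq X ≤ c := hXminS X₀ ⟨⟨hX₀skew, hX₀tr, hX₀exp⟩, le_refl c⟩
        _ ≤ frobSq Y := le_of_not_ge hYc
  have hXsu : X ∈ suSet n := ⟨hXS.1.1, hXS.1.2.1⟩
  have hXexp : NormedSpace.exp X = Q := hXS.1.2.2
  have hleast : IsLeast {r : ℝ | ∃ Z ∈ suSet n, NormedSpace.exp Z = Q ∧ frobSq Z = r}
      (frobSq X) := ⟨⟨X, hXsu, hXexp, rfl⟩, by rintro r ⟨Z, hZ, hZe, rfl⟩; exact hglob Z hZ hZe⟩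
  have hmQ : frobSq X = mQ Q := (hleast.csInf_eq).symm
  exact ⟨⟨X, hXsu, hXexp, hmQ, hglob⟩, ⟨X, hXsu, hXexp, hmQ⟩⟩
end
end

section
/- Let n ≥ 2 and let Q ∈ SU_n have eigenvalues μ_1, …, μ_n counted with multiplicity. If ζ(Q) := (1/(2π))·Σ_{j=1}^n arg(μ_j) = 0, then m(Q) = Σ_{j=1}^n (arg(μ_j))². -/
noncomputable section

open scoped Real Matrix
open Matrix

set_option maxHeartbeats 1000000

section Helpers

open Module Polynomial

lemma joint_eigenbasis {E : Type*} [NormedAddCommGroup E] [InnerProductSpace ℂ E]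
    [FiniteDimensional ℂ E] {n : ℕ} (hn : Module.finrank ℂ E = n)
    {S T : E →ₗ[ℂ] E} (hS : S.IsSymmetric) (hT : T.IsSymmetric) (hST : Commute S T) :
    ∃ (b : OrthonormalBasis (Fin n) ℂ E) (α β : Fin n → ℂ),
      ∀ j, S (b j) = α j • b j ∧ T (b j) = β j • b j := by
  classical
  have internal := hS.directSum_isInternal_of_commute hT hST
  have orth := hS.orthogonalFamily_eigenspace_inf_eigenspace hT
  have hfin : {i : ℂ × ℂ |
      (End.eigenspace S i.2 ⊓ End.eigenspace T i.1) ≠ ⊥}.Finite :=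
    Submodule.finite_ne_bot_of_iSupIndep internal.submodule_iSupIndep
  haveI : Fintype {i : ℂ × ℂ //
      (End.eigenspace S i.2 ⊓ End.eigenspace T i.1) ≠ ⊥} := hfin.fintype
  have orth' := orth.comp (f := (Subtype.val : {i : ℂ × ℂ //
      (End.eigenspace S i.2 ⊓ End.eigenspace T i.1) ≠ ⊥} → ℂ × ℂ)) Subtype.coe_injective
  have internal' := orth'.isInternal_iff.mpr (by
    rw [iSup_ne_bot_subtype, internal.submodule_iSup_eq_top, Submodule.top_orthogonal_eq_bot])
  refine ⟨internal'.subordinateOrthonormalBasis hn orth',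
    fun j => ((internal'.subordinateOrthonormalBasisIndex hn j orth' : _) : ℂ × ℂ).2,
    fun j => ((internal'.subordinateOrthonormalBasisIndex hn j orth' : _) : ℂ × ℂ).1, ?_⟩
  intro j
  have hmem := internal'.subordinateOrthonormalBasis_subordinate hn j orth'
  obtain ⟨h1, h2⟩ := Submodule.mem_inf.mp hmem
  rw [Module.End.mem_eigenspace_iff] at h1 h2
  exact ⟨h1, h2⟩

lemma unitary_spectral {n : ℕ} (Q : Matrix (Fin n) (Fin n) ℂ)
    (hQ : Q * Qᴴ = 1) :
    ∃ (U : Matrix (Fin n) (Fin n) ℂ) (d : Fin n → ℂ),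
      U ∈ Matrix.unitaryGroup (Fin n) ℂ ∧ Q = U * diagonal d * star U := by
  classical
  have hc : Commute Q Qᴴ := by
    unfold Commute SemiconjBy
    rw [hQ, mul_eq_one_comm.mp hQ]
  set A : Matrix (Fin n) (Fin n) ℂ := Q + Qᴴ with hAdef
  set B : Matrix (Fin n) (Fin n) ℂ := Complex.I • (Qᴴ - Q) with hBdef
  have hA : A.IsHermitian := by
    simp [Matrix.IsHermitian, hAdef, conjTranspose_add, add_comm]
  have hB : B.IsHermitian := by
    simp only [Matrix.IsHermitian, hBdef, conjTranspose_smul, conjTranspose_sub,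
      conjTranspose_conjTranspose, Complex.star_def, Complex.conj_I, neg_smul, smul_sub]
    module
  have hABc : Commute A B := by
    have h1 : Commute A Qᴴ := hc.add_left (Commute.refl Qᴴ)
    have h2 : Commute A Q := (Commute.refl Q).add_left hc.symm
    exact ((h1.sub_right h2)).smul_right Complex.I
  have hQA : Q = (2⁻¹ : ℂ) • (A + Complex.I • B) := by
    rw [hAdef, hBdef, smul_smul, Complex.I_mul_I]
    module
  have hS1 : (toEuclideanLin A).IsSymmetric := isHermitian_iff_isSymmetric.mp hA
  have hS2 : (toEuclideanLin B).IsSymmetric := isHermitian_iff_isSymmetric.mp hB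
  have hφ : ∀ M : Matrix (Fin n) (Fin n) ℂ,
      toEuclideanLin M = Matrix.toLinAlgEquiv (PiLp.basisFun 2 ℂ (Fin n)) M := by
    intro M; rw [Matrix.toEuclideanLin_eq_toLin]; rfl
  have hcommS : Commute (toEuclideanLin A) (toEuclideanLin B) := by
    rw [hφ A, hφ B]
    exact hABc.map (Matrix.toLinAlgEquiv (PiLp.basisFun 2 ℂ (Fin n)))
  obtain ⟨b, α, β, hb⟩ := joint_eigenbasis finrank_euclideanSpace_fin hS1 hS2 hcommS
  set d : Fin n → ℂ := fun j => 2⁻¹ * (α j + Complex.I * β j) with hddef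
  have heig : ∀ j, toEuclideanLin Q (b j) = d j • (b j) := by
    intro j
    obtain ⟨h1, h2⟩ := hb j
    rw [hQA]
    simp only [_root_.map_smul, _root_.map_add, LinearMap.add_apply, LinearMap.smul_apply,
      h1, h2, hddef]
    match_scalars
    ring
  have hmv : ∀ j, Q *ᵥ ⇑(b j) = d j • ⇑(b j) := by
    intro j
    have h := heig j
    rw [toEuclideanLin_apply] at h
    exact congrArg (WithLp.equiv 2 (Fin n → ℂ)) h
  set U : Matrix (Fin n) (Fin n) ℂ := (EuclideanSpace.basisFun (Fin n) ℂ).toBasis.toMatrix ⇑b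
    with hUdef
  have hU : U ∈ Matrix.unitaryGroup (Fin n) ℂ :=
    (EuclideanSpace.basisFun (Fin n) ℂ).toMatrix_orthonormalBasis_mem_unitary b
  have hU1 : star U * U = 1 := Matrix.mem_unitaryGroup_iff'.mp hU
  have hU2 : U * star U = 1 := Matrix.mem_unitaryGroup_iff.mp hU
  have hUmv : ∀ j, U *ᵥ Pi.single j 1 = ⇑(b j) := by
    intro j
    simp only [mulVec_single, mul_one, MulOpposite.op_one, one_smul]
    rfl
  have hUstar : ∀ j, star U *ᵥ ⇑(b j) = Pi.single j 1 := by
    intro j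
    rw [← hUmv, mulVec_mulVec, hU1, one_mulVec]
  have key : star U * Q * U = diagonal d := by
    apply Matrix.toEuclideanLin.injective
    apply Basis.ext (EuclideanSpace.basisFun (Fin n) ℂ).toBasis
    intro i
    simp only [toEuclideanLin_apply, OrthonormalBasis.coe_toBasis, EuclideanSpace.basisFun_apply,
      PiLp.ofLp_single, ← mulVec_mulVec, hUmv, hmv, Matrix.diagonal_mulVec_single, mulVec_smul,
      hUstar, WithLp.toLp_smul, PiLp.toLp_single, mul_one]
    apply PiLp.ext
    intro j
    simp only [PiLp.smul_apply, EuclideanSpace.single_apply, smul_eq_mul, mul_ite, mul_one,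
      mul_zero]
  refine ⟨U, d, hU, ?_⟩
  rw [← key]
  rw [show U * (star U * Q * U) * star U = (U * star U) * Q * (U * star U) by
    noncomm_ring, hU2, one_mul, mul_one]

lemma charpoly_conj_eq {n : ℕ} (U A V : Matrix (Fin n) (Fin n) ℂ)
    (hUV : U * V = 1) : (U * A * V).charpoly = A.charpoly := by
  have hVU : V * U = 1 := mul_eq_one_comm.mp hUV
  have hmap : ∀ M N : Matrix (Fin n) (Fin n) ℂ,
      (M * N).map (Polynomial.C : ℂ → ℂ[X]) = M.map Polynomial.C * N.map Polynomial.C :=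
    fun M N => Matrix.map_mul (f := (Polynomial.C : ℂ →+* ℂ[X]))
  have hcm : charmatrix (U * A * V) =
      U.map Polynomial.C * charmatrix A * V.map Polynomial.C := by
    rw [charmatrix, charmatrix, Matrix.mul_sub, Matrix.sub_mul]
    congr 1
    · rw [Matrix.mul_assoc,
        (Matrix.scalar_commute (X : ℂ[X]) (fun r' => Commute.all _ _) (V.map Polynomial.C)).eq,
        ← Matrix.mul_assoc, ← hmap, hUV]
      simp
    · rw [RingHom.mapMatrix_apply, RingHom.mapMatrix_apply, hmap, hmap]
  rw [Matrix.charpoly, Matrix.charpoly, hcm, Matrix.det_mul, Matrix.det_mul]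
  rw [mul_comm (U.map Polynomial.C).det _, mul_assoc, ← Matrix.det_mul, ← hmap, hUV]
  simp

lemma roots_charpoly_diagonal {n : ℕ} (d : Fin n → ℂ) :
    (Matrix.diagonal d).charpoly.roots = Multiset.map d Finset.univ.val := by
  rw [Matrix.charpoly_of_upperTriangular _ (Matrix.blockTriangular_diagonal d)]
  have : ∏ i : Fin n, (X - C (Matrix.diagonal d i i)) =
      (Multiset.map (fun a => X - C a) (Multiset.map d Finset.univ.val)).prod := by
    rw [Multiset.map_map]
    simp only [Matrix.diagonal_apply_eq]
    rfl
  rw [this, Polynomial.roots_multiset_prod_X_sub_C]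

lemma arg_exp_sq_le (θ : ℝ) : (Complex.exp (θ * Complex.I)).arg ^ 2 ≤ θ ^ 2 := by
  set a : ℝ := (Complex.exp (θ * Complex.I)).arg with ha
  have habs : ‖Complex.exp (θ * Complex.I)‖ = 1 := by
    rw [Complex.norm_exp]
    simp
  have hexp : Complex.exp ((a : ℂ) * Complex.I) = Complex.exp ((θ : ℂ) * Complex.I) := by
    have := Complex.norm_mul_exp_arg_mul_I (Complex.exp (θ * Complex.I))
    rw [habs] at this
    simpa using this
  obtain ⟨k, hk⟩ := Complex.exp_eq_exp_iff_exists_int.mp hexp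
  have hk' : a = θ + k * (2 * Real.pi) := by
    have := congrArg Complex.im hk
    simpa [Complex.add_im, Complex.mul_im] using this
  have hbound : |a| ≤ Real.pi := Complex.abs_arg_le_pi _
  rcases eq_or_ne k 0 with h0 | h0
  · simp [h0] at hk'
    rw [hk']
  · have h1 : (1 : ℝ) ≤ |(k : ℝ)| := by
      have := Int.one_le_abs (by exact_mod_cast h0 : k ≠ 0)
      exact_mod_cast this
    have hpi : 0 < Real.pi := Real.pi_pos
    have : |a| ≤ |θ| := by
      have hθ : θ = a - k * (2 * Real.pi) := by linarith [hk']
      have h2 : |θ| ≥ |(k : ℝ) * (2 * Real.pi)| - |a| := by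
        rw [hθ]
        have := abs_sub_abs_le_abs_sub ((k:ℝ) * (2*Real.pi)) a
        rw [abs_sub_comm] at this
        linarith
      have h3 : |(k : ℝ) * (2 * Real.pi)| ≥ 2 * Real.pi := by
        rw [abs_mul, abs_of_pos (by linarith : (0:ℝ) < 2 * Real.pi)]
        nlinarith
      linarith
    calc a ^ 2 = |a| ^ 2 := (sq_abs a).symm
    _ ≤ |θ| ^ 2 := pow_le_pow_left₀ (abs_nonneg a) this 2
    _ = θ ^ 2 := sq_abs θ

lemma sum_transfer {n : ℕ} {M : Type*} [AddCommMonoid M] (f : ℂ → M) {d μ : Fin n → ℂ}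
    (h : Multiset.map d Finset.univ.val = Multiset.map μ Finset.univ.val) :
    ∑ j, f (d j) = ∑ j, f (μ j) := by
  have : (Multiset.map f (Multiset.map d Finset.univ.val)).sum =
      (Multiset.map f (Multiset.map μ Finset.univ.val)).sum := by rw [h]
  simpa [Multiset.map_map, Finset.sum, Function.comp_def] using this

lemma exp_conj_unitary {n : ℕ} (U : Matrix (Fin n) (Fin n) ℂ)
    (hU1 : star U * U = 1) (hU2 : U * star U = 1) (M : Matrix (Fin n) (Fin n) ℂ) :
    NormedSpace.exp (U * M * star U) = U * NormedSpace.exp M * star U :=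
  Matrix.exp_units_conj (⟨U, star U, hU2, hU1⟩ : (Matrix (Fin n) (Fin n) ℂ)ˣ) M

lemma exp_diagonal_c {n : ℕ} (v : Fin n → ℂ) :
    NormedSpace.exp (Matrix.diagonal v) = Matrix.diagonal (fun i => Complex.exp (v i)) := by
  rw [Matrix.exp_diagonal]
  congr 1
  funext i
  rw [Pi.exp_def, ← Complex.exp_eq_exp_ℂ]

lemma trace_conj_unitary {n : ℕ} (U : Matrix (Fin n) (Fin n) ℂ)
    (hU1 : star U * U = 1) (M : Matrix (Fin n) (Fin n) ℂ) :
    Matrix.trace (U * M * star U) = Matrix.trace M := by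
  rw [Matrix.trace_mul_cycle, hU1, one_mul]

lemma frobSq_conj_diag {n : ℕ} (U : Matrix (Fin n) (Fin n) ℂ)
    (hU1 : star U * U = 1) (hU2 : U * star U = 1) (v : Fin n → ℂ) :
    frobSq (U * Matrix.diagonal v * star U) = ∑ i, Complex.normSq (v i) := by
  unfold frobSq
  have h1 : (U * Matrix.diagonal v * star U)ᴴ = U * Matrix.diagonal (star v) * star U := by
    simp only [Matrix.star_eq_conjTranspose, conjTranspose_mul, conjTranspose_conjTranspose,
      diagonal_conjTranspose]
    rw [Matrix.mul_assoc]
  rw [h1]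
  rw [show (U * Matrix.diagonal v * star U) * (U * Matrix.diagonal (star v) * star U)
      = U * Matrix.diagonal v * (star U * U) * (Matrix.diagonal (star v) * star U) by
    noncomm_ring, hU1, mul_one]
  rw [show U * Matrix.diagonal v * (Matrix.diagonal (star v) * star U)
      = U * (Matrix.diagonal v * Matrix.diagonal (star v)) * star U by noncomm_ring]
  rw [trace_conj_unitary U hU1, diagonal_mul_diagonal, Matrix.trace_diagonal]
  rw [Complex.re_sum]
  congr 1
  funext i
  simp only [Pi.mul_apply, Pi.star_apply, Complex.star_def]
  rw [Complex.mul_conj, Complex.ofReal_re]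

end Helpers

/-- if `ζ(Q) = 0` then `m(Q) = Σ (arg μ_j)²`. -/
theorem stmt_8 (n : ℕ) (hn : 2 ≤ n) (Q : Matrix (Fin n) (Fin n) ℂ)
    (hQ : Q ∈ SpecialUnitary n) (μ : Fin n → ℂ)
    (hμ : Q.charpoly.roots = Multiset.map μ Finset.univ.val)
    (hζ : (∑ j, (μ j).arg) = 0) :
    mQ Q = ∑ j, ((μ j).arg) ^ 2 := by
  obtain ⟨hQ1, hQdet⟩ := hQ
  -- Lower bound : every admissible value is at least the target.
  have hlow : ∀ r ∈ {r : ℝ | ∃ X ∈ suSet n, NormedSpace.exp X = Q ∧ frobSq X = r},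
      (∑ j, ((μ j).arg) ^ 2) ≤ r := by
    rintro r ⟨X, ⟨hXsk, hXtr⟩, hXexp, rfl⟩
    have hH : ((-Complex.I) • X).IsHermitian := by
      simp only [Matrix.IsHermitian, conjTranspose_smul, hXsk, Complex.star_def, map_neg,
        Complex.conj_I, neg_neg, smul_neg]
      module
    set θ := hH.eigenvalues with hθdef
    set V : Matrix (Fin n) (Fin n) ℂ := (hH.eigenvectorUnitary : Matrix (Fin n) (Fin n) ℂ)
      with hVdef
    have hVmem : V ∈ Matrix.unitaryGroup (Fin n) ℂ := hH.eigenvectorUnitary.2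
    have hV1 : star V * V = 1 := Matrix.mem_unitaryGroup_iff'.mp hVmem
    have hV2 : V * star V = 1 := Matrix.mem_unitaryGroup_iff.mp hVmem
    have hspec : (-Complex.I) • X =
        V * Matrix.diagonal (RCLike.ofReal ∘ θ) * star V := hH.spectral_theorem
    have hXeq : X = V * Matrix.diagonal (fun i => (θ i : ℂ) * Complex.I) * star V := by
      have h1 : X = Complex.I • ((-Complex.I) • X) := by
        rw [smul_smul]
        simp
      have h2 : (Matrix.diagonal fun i => (θ i : ℂ) * Complex.I)
          = Complex.I • Matrix.diagonal (RCLike.ofReal ∘ θ) := by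
        rw [← Matrix.diagonal_smul]
        apply congrArg Matrix.diagonal
        funext i
        show (θ i : ℂ) * Complex.I = Complex.I * (RCLike.ofReal (θ i))
        rw [mul_comm]
        rfl
      rw [h1, hspec, h2]
      rw [show V * (Complex.I • Matrix.diagonal (RCLike.ofReal ∘ θ)) * star V
        = Complex.I • (V * Matrix.diagonal (RCLike.ofReal ∘ θ) * star V) by
          rw [Matrix.mul_smul, Matrix.smul_mul]]
    have hexpQ : Q = V * Matrix.diagonal (fun i => Complex.exp ((θ i : ℂ) * Complex.I))
        * star V := by
      rw [← hXexp, hXeq, exp_conj_unitary V hV1 hV2, exp_diagonal_c]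
    have hmu2 : Multiset.map (fun i => Complex.exp ((θ i : ℂ) * Complex.I)) Finset.univ.val
        = Multiset.map μ Finset.univ.val := by
      rw [← roots_charpoly_diagonal (fun i => Complex.exp ((θ i : ℂ) * Complex.I)),
        ← charpoly_conj_eq V (Matrix.diagonal fun i => Complex.exp ((θ i : ℂ) * Complex.I))
          (star V) hV2, ← hexpQ, hμ]
    have hfrob : frobSq X = ∑ i, (θ i) ^ 2 := by
      rw [hXeq, frobSq_conj_diag V hV1 hV2]
      apply Finset.sum_congr rfl
      intro i _
      simp [Complex.normSq_mul, Complex.normSq_I, Complex.normSq_ofReal, sq]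
    calc (∑ j, ((μ j).arg) ^ 2)
        = ∑ i, (Complex.exp ((θ i : ℂ) * Complex.I)).arg ^ 2 :=
          (sum_transfer (fun z => z.arg ^ 2) hmu2).symm
      _ ≤ ∑ i, (θ i) ^ 2 := Finset.sum_le_sum (fun i _ => arg_exp_sq_le (θ i))
      _ = frobSq X := hfrob.symm
  -- Upper bound : construct the minimizing logarithm.
  obtain ⟨U, d, hU, hQeq⟩ := unitary_spectral Q hQ1
  have hU1 : star U * U = 1 := Matrix.mem_unitaryGroup_iff'.mp hU
  have hU2 : U * star U = 1 := Matrix.mem_unitaryGroup_iff.mp hU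
  have hroots : Multiset.map d Finset.univ.val = Multiset.map μ Finset.univ.val := by
    rw [← roots_charpoly_diagonal d, ← charpoly_conj_eq U (Matrix.diagonal d) (star U) hU2,
      ← hQeq, hμ]
  have habs : ∀ i, ‖d i‖ = 1 := by
    have hDD : Matrix.diagonal d * (Matrix.diagonal d)ᴴ = 1 := by
      have h1 : Matrix.diagonal d = star U * Q * U := by
        rw [hQeq, show star U * (U * Matrix.diagonal d * star U) * U
          = (star U * U) * Matrix.diagonal d * (star U * U) by noncomm_ring, hU1, one_mul,
          mul_one]
      have h2 : (star U * Q * U)ᴴ = star U * Qᴴ * U := by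
        simp only [Matrix.star_eq_conjTranspose, conjTranspose_mul, conjTranspose_conjTranspose]
        rw [Matrix.mul_assoc]
      rw [h1, h2, show (star U * Q * U) * (star U * Qᴴ * U)
        = star U * (Q * (U * star U) * Qᴴ) * U by noncomm_ring, hU2, mul_one, hQ1,
        show star U * 1 * U = star U * U by noncomm_ring, hU1]
    intro i
    have h := (Matrix.ext_iff.2 hDD) i i
    rw [diagonal_conjTranspose, diagonal_mul_diagonal] at h
    rw [Matrix.diagonal_apply_eq, Matrix.one_apply_eq] at h
    simp only [Pi.mul_apply, Pi.star_apply, Complex.star_def] at h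
    rw [Complex.mul_conj] at h
    have : Complex.normSq (d i) = 1 := by exact_mod_cast h
    rw [Complex.norm_def, this, Real.sqrt_one]
  set v : Fin n → ℂ := fun i => ((d i).arg : ℂ) * Complex.I with hvdef
  set Xup : Matrix (Fin n) (Fin n) ℂ := U * Matrix.diagonal v * star U with hXupdef
  have hXupSk : Xupᴴ = -Xup := by
    have h1 : Xupᴴ = U * Matrix.diagonal (star v) * star U := by
      simp only [hXupdef, Matrix.star_eq_conjTranspose, conjTranspose_mul,
        conjTranspose_conjTranspose, diagonal_conjTranspose]
      rw [Matrix.mul_assoc]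
    rw [h1]
    have h2 : star v = -v := by
      funext i
      simp only [Pi.star_apply, Pi.neg_apply, hvdef, Complex.star_def, _root_.map_mul,
        Complex.conj_I, Complex.conj_ofReal, mul_neg]
    have h3 : Matrix.diagonal (-v) = -Matrix.diagonal v := (Matrix.diagonal_neg v).symm
    rw [h2, h3, Matrix.mul_neg, Matrix.neg_mul, hXupdef]
  have hsumarg : ∑ i, (d i).arg = 0 := by
    rw [sum_transfer (fun z => z.arg) hroots]
    exact hζ
  have hXupTr : Matrix.trace Xup = 0 := by
    rw [hXupdef, trace_conj_unitary U hU1, Matrix.trace_diagonal]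
    simp only [hvdef]
    rw [← Finset.sum_mul, ← Complex.ofReal_sum, hsumarg]
    simp
  have hXupExp : NormedSpace.exp Xup = Q := by
    rw [hXupdef, exp_conj_unitary U hU1 hU2, exp_diagonal_c, hQeq]
    have hd : ∀ i, Complex.exp (v i) = d i := by
      intro i
      simp only [hvdef]
      have := Complex.norm_mul_exp_arg_mul_I (d i)
      rw [habs i] at this
      simpa using this
    rw [show (fun i => Complex.exp (v i)) = d from funext hd]
  have hXupFrob : frobSq Xup = ∑ j, ((μ j).arg) ^ 2 := by
    rw [hXupdef, frobSq_conj_diag U hU1 hU2]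
    calc ∑ i, Complex.normSq (v i) = ∑ i, (fun z : ℂ => z.arg ^ 2) (d i) := by
          apply Finset.sum_congr rfl
          intro i _
          simp [hvdef, Complex.normSq_mul, Complex.normSq_I, Complex.normSq_ofReal, sq]
      _ = ∑ j, ((μ j).arg) ^ 2 := sum_transfer (fun z => z.arg ^ 2) hroots
  have hmem : (∑ j, ((μ j).arg) ^ 2) ∈
      {r : ℝ | ∃ X ∈ suSet n, NormedSpace.exp X = Q ∧ frobSq X = r} :=
    ⟨Xup, ⟨hXupSk, hXupTr⟩, hXupExp, hXupFrob⟩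
  rw [mQ]
  exact le_antisymm (csInf_le ⟨_, fun r hr => hlow r hr⟩ hmem) (le_csInf ⟨_, hmem⟩ hlow)
end
end

section
/- Let n ≥ 2 and let Q ∈ SU_n have eigenvalues μ_1, …, μ_n counted with multiplicity, ordered so that arg(μ_1) ≤ ⋯ ≤ arg(μ_n), and suppose ζ := ζ(Q) = (1/(2π))·Σ_{j=1}^n arg(μ_j) ≥ 1. Then Θ(Q) equals the set of all X ∈ su_n with exp(X) = Q whose multiset of eigenvalues is { arg(μ_1)·i, …, arg(μ_{n−ζ})·i, (arg(μ_{n−ζ+1}) − 2π)·i, …, (arg(μ_n) − 2π)·i }. -/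
noncomputable section

open scoped Real Matrix
open Matrix

namespace Stmt11Aux

open Polynomial


variable {n : ℕ}

/-- map over univ is invariant under composing with a permutation. -/
lemma map_comp_perm {α : Type*} (f : Fin n → α) (σ : Equiv.Perm (Fin n)) :
    Multiset.map (fun j => f (σ j)) Finset.univ.val = Multiset.map f Finset.univ.val := by
  rw [show (fun j => f (σ j)) = f ∘ σ from rfl, Fin.univ_val_map, Fin.univ_val_map]
  exact Multiset.coe_eq_coe.2 (Equiv.Perm.ofFn_comp_perm σ f)

lemma exists_comp_perm {α : Type*} [LinearOrder α] (f g : Fin n → α)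
    (h : Multiset.map f Finset.univ.val = Multiset.map g Finset.univ.val) :
    ∃ σ : Equiv.Perm (Fin n), ∀ j, f j = g (σ j) := by
  have hperm : (List.ofFn (f ∘ Tuple.sort f)).Perm (List.ofFn (g ∘ Tuple.sort g)) := by
    refine (Equiv.Perm.ofFn_comp_perm (Tuple.sort f) f).trans ?_
    refine Multiset.coe_eq_coe.1 ?_ |>.trans (Equiv.Perm.ofFn_comp_perm (Tuple.sort g) g).symm
    rw [← Fin.univ_val_map, ← Fin.univ_val_map, h]
  have heq : List.ofFn (f ∘ Tuple.sort f) = List.ofFn (g ∘ Tuple.sort g) :=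
    List.Perm.eq_of_sortedLE
      (List.sortedLE_ofFn_iff.2 (Tuple.monotone_sort f))
      (List.sortedLE_ofFn_iff.2 (Tuple.monotone_sort g)) hperm
  have hfun : f ∘ Tuple.sort f = g ∘ Tuple.sort g := List.ofFn_inj.1 heq
  refine ⟨((Tuple.sort f).symm).trans (Tuple.sort g), fun j => ?_⟩
  have := congrFun hfun ((Tuple.sort f).symm j)
  simpa using this

lemma exists_comp_perm_complex (f g : Fin n → ℂ)
    (h : Multiset.map f Finset.univ.val = Multiset.map g Finset.univ.val) :
    ∃ σ : Equiv.Perm (Fin n), ∀ j, f j = g (σ j) := by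
  classical
  let ι : ℂ → ℝ ×ₗ ℝ := fun z => toLex (z.re, z.im)
  have hι : Function.Injective ι := by
    intro z w hzw
    have h1 : (z.re, z.im) = (w.re, w.im) := congrArg ofLex hzw
    exact Complex.ext (congrArg Prod.fst h1) (congrArg Prod.snd h1)
  obtain ⟨σ, hσ⟩ := exists_comp_perm (ι ∘ f) (ι ∘ g)
    (by rw [← Multiset.map_map, ← Multiset.map_map, h])
  exact ⟨σ, fun j => hι (hσ j)⟩



variable {n : ℕ}

lemma charpoly_conj (P B A : Matrix (Fin n) (Fin n) ℂ) (h1 : P * B = 1) :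
    (P * A * B).charpoly = A.charpoly := by
  have hmap : (C : ℂ →+* ℂ[X]).mapMatrix P * (C : ℂ →+* ℂ[X]).mapMatrix B = 1 := by
    rw [← _root_.map_mul, h1, _root_.map_one]
  have hc : charmatrix (P * A * B) =
      (C : ℂ →+* ℂ[X]).mapMatrix P * charmatrix A * (C : ℂ →+* ℂ[X]).mapMatrix B := by
    unfold charmatrix
    rw [mul_sub, sub_mul, _root_.map_mul, _root_.map_mul]
    congr 1
    symm
    calc (C : ℂ →+* ℂ[X]).mapMatrix P * Matrix.scalar (Fin n) (X : ℂ[X]) *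
          (C : ℂ →+* ℂ[X]).mapMatrix B
        = Matrix.scalar (Fin n) (X : ℂ[X]) * ((C : ℂ →+* ℂ[X]).mapMatrix P *
            (C : ℂ →+* ℂ[X]).mapMatrix B) := by
          rw [← (scalar_commute (X : ℂ[X]) (fun r => Commute.all _ _) _).eq, mul_assoc]
      _ = Matrix.scalar (Fin n) (X : ℂ[X]) := by rw [hmap, mul_one]
  unfold Matrix.charpoly
  rw [hc, det_mul, det_mul, mul_comm _ (charmatrix A).det, mul_assoc, ← det_mul, hmap, det_one,
    mul_one]

lemma charpoly_diagonal (v : Fin n → ℂ) :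
    (Matrix.diagonal v).charpoly = ∏ j, (X - C (v j)) := by
  unfold Matrix.charpoly
  have hd : charmatrix (Matrix.diagonal v) = Matrix.diagonal (fun j => X - C (v j)) := by
    ext i j
    by_cases h : i = j
    · subst h; simp
    · rw [charmatrix_apply_ne _ _ _ h, Matrix.diagonal_apply_ne _ h,
        Matrix.diagonal_apply_ne _ h, map_zero, neg_zero]
  rw [hd, det_diagonal]

lemma charpoly_diagonal_roots (v : Fin n → ℂ) :
    (Matrix.diagonal v).charpoly.roots = Multiset.map v Finset.univ.val := by
  rw [charpoly_diagonal]
  have := Polynomial.roots_multiset_prod_X_sub_C (Multiset.map v Finset.univ.val)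
  rw [Multiset.map_map] at this
  rw [Finset.prod_eq_multiset_prod]
  exact this

lemma cd_charpoly (U : Matrix (Fin n) (Fin n) ℂ) (hU1 : U * Uᴴ = 1) (v : Fin n → ℂ) :
    (U * Matrix.diagonal v * Uᴴ).charpoly.roots = Multiset.map v Finset.univ.val := by
  rw [charpoly_conj U Uᴴ _ hU1, charpoly_diagonal_roots]

lemma cd_exp (U : Matrix (Fin n) (Fin n) ℂ) (hU1 : U * Uᴴ = 1) (hU2 : Uᴴ * U = 1) (v : Fin n → ℂ) :
    NormedSpace.exp (U * Matrix.diagonal v * Uᴴ)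
      = U * Matrix.diagonal (fun j => Complex.exp (v j)) * Uᴴ := by
  have hinv : U⁻¹ = Uᴴ := Matrix.inv_eq_right_inv hU1
  have hUnit : IsUnit U := ⟨⟨U, Uᴴ, hU1, hU2⟩, rfl⟩
  rw [← hinv, Matrix.exp_conj U _ hUnit, Matrix.exp_diagonal,
    show NormedSpace.exp v = fun j => Complex.exp (v j) from
      by rw [Pi.exp_def]; exact funext fun j => by rw [← Complex.exp_eq_exp_ℂ]]

lemma cd_trace (U : Matrix (Fin n) (Fin n) ℂ) (hU2 : Uᴴ * U = 1) (v : Fin n → ℂ) :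
    Matrix.trace (U * Matrix.diagonal v * Uᴴ) = ∑ j, v j := by
  rw [Matrix.trace_mul_cycle, hU2, one_mul, Matrix.trace_diagonal]

lemma cd_skew (U : Matrix (Fin n) (Fin n) ℂ) (r : Fin n → ℝ) :
    (U * Matrix.diagonal (fun j => (r j : ℂ) * Complex.I) * Uᴴ)ᴴ
      = -(U * Matrix.diagonal (fun j => (r j : ℂ) * Complex.I) * Uᴴ) := by
  have hst : (star fun j => (r j : ℂ) * Complex.I) = fun j => -((r j : ℂ) * Complex.I) := by
    funext j
    simp [Pi.star_apply, Complex.ext_iff]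
  rw [conjTranspose_mul, conjTranspose_mul, conjTranspose_conjTranspose,
    diagonal_conjTranspose, hst, ← diagonal_neg]
  simp only [Matrix.neg_mul, Matrix.mul_neg, mul_assoc]

lemma cd_frobSq (U : Matrix (Fin n) (Fin n) ℂ) (hU2 : Uᴴ * U = 1) (r : Fin n → ℝ) :
    (Matrix.trace ((U * Matrix.diagonal (fun j => (r j : ℂ) * Complex.I) * Uᴴ) *
      (U * Matrix.diagonal (fun j => (r j : ℂ) * Complex.I) * Uᴴ)ᴴ)).re = ∑ j, (r j) ^ 2 := by
  rw [cd_skew, mul_neg]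
  have hassoc : (U * Matrix.diagonal (fun j => (r j : ℂ) * Complex.I) * Uᴴ) *
      (U * Matrix.diagonal (fun j => (r j : ℂ) * Complex.I) * Uᴴ)
      = U * (Matrix.diagonal (fun j => (r j : ℂ) * Complex.I) *
          Matrix.diagonal (fun j => (r j : ℂ) * Complex.I)) * Uᴴ := by
    have hcanc : Uᴴ * (U * (Matrix.diagonal (fun j => (r j : ℂ) * Complex.I) * Uᴴ))
        = Matrix.diagonal (fun j => (r j : ℂ) * Complex.I) * Uᴴ := by
      rw [← mul_assoc, hU2, one_mul]
    simp only [mul_assoc, hcanc]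
  rw [hassoc, Matrix.diagonal_mul_diagonal, trace_neg, cd_trace U hU2]
  have hsq : ∀ j, ((r j : ℂ) * Complex.I) * ((r j : ℂ) * Complex.I) = -((r j : ℂ) ^ 2) := by
    intro j
    rw [mul_mul_mul_comm, Complex.I_mul_I]
    ring
  simp only [hsq]
  simp [← Complex.ofReal_pow]



variable {n : ℕ}

lemma skew_decomp {X : Matrix (Fin n) (Fin n) ℂ} (h : Xᴴ = -X) :
    ∃ (U : Matrix (Fin n) (Fin n) ℂ) (a : Fin n → ℝ), U * Uᴴ = 1 ∧ Uᴴ * U = 1 ∧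
      X = U * Matrix.diagonal (fun j => (a j : ℂ) * Complex.I) * Uᴴ := by
  have hH : (Complex.I • X).IsHermitian := by
    unfold Matrix.IsHermitian
    rw [Matrix.conjTranspose_smul, h]
    simp [Complex.star_def, Complex.conj_I]
  set U : Matrix (Fin n) (Fin n) ℂ := (hH.eigenvectorUnitary : Matrix (Fin n) (Fin n) ℂ) with hU
  have hmem := hH.eigenvectorUnitary.2
  have hU1 : U * Uᴴ = 1 := by
    rw [← Matrix.star_eq_conjTranspose]
    exact (Matrix.mem_unitaryGroup_iff).mp hmem
  have hU2 : Uᴴ * U = 1 := by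
    rw [← Matrix.star_eq_conjTranspose]
    exact (Matrix.mem_unitaryGroup_iff').mp hmem
  refine ⟨U, fun j => -(hH.eigenvalues j), hU1, hU2, ?_⟩
  have hspec := hH.spectral_theorem
  have hX : X = (-Complex.I) • (Complex.I • X) := by
    rw [smul_smul]
    simp
  conv_lhs => rw [hX, hspec]
  rw [Unitary.conjStarAlgAut_apply, Matrix.star_eq_conjTranspose, ← hU]
  have h1 : (-Complex.I) • (U * Matrix.diagonal ((RCLike.ofReal : ℝ → ℂ) ∘ hH.eigenvalues) * Uᴴ)
      = U * ((-Complex.I) • Matrix.diagonal ((RCLike.ofReal : ℝ → ℂ) ∘ hH.eigenvalues)) * Uᴴ := by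
    rw [Matrix.mul_smul, Matrix.smul_mul]
  have h2 : (-Complex.I) • Matrix.diagonal ((RCLike.ofReal : ℝ → ℂ) ∘ hH.eigenvalues)
      = Matrix.diagonal (fun j => ((-(hH.eigenvalues j) : ℝ) : ℂ) * Complex.I) := by
    rw [← Matrix.diagonal_smul]
    refine congrArg Matrix.diagonal (funext fun j => ?_)
    show -Complex.I * (RCLike.ofReal (hH.eigenvalues j)) = _
    rw [show (RCLike.ofReal (hH.eigenvalues j) : ℂ) = ((hH.eigenvalues j : ℝ) : ℂ) from rfl]
    push_cast
    ring
  rw [h1, h2]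



lemma sum_indicator (n ζ : ℕ) (hζn : ζ ≤ n) :
    ∑ j : Fin n, (if (j : ℕ) < n - ζ then (0:ℝ) else 1) = ζ := by
  rw [Fin.sum_univ_eq_sum_range (fun i => if i < n - ζ then (0:ℝ) else 1)]
  rw [← Nat.Ico_zero_eq_range, ← Finset.sum_Ico_consecutive _ (Nat.zero_le (n - ζ)) (Nat.sub_le n ζ)]
  have h1 : ∑ i ∈ Finset.Ico 0 (n - ζ), (if i < n - ζ then (0:ℝ) else 1) = 0 := by
    apply Finset.sum_eq_zero
    intro i hi
    rw [Finset.mem_Ico] at hi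
    rw [if_pos hi.2]
  have h2 : ∑ i ∈ Finset.Ico (n - ζ) n, (if i < n - ζ then (0:ℝ) else 1) = ζ := by
    have hone : ∀ i ∈ Finset.Ico (n - ζ) n, (if i < n - ζ then (0:ℝ) else 1) = 1 := by
      intro i hi
      rw [Finset.mem_Ico] at hi
      exact if_neg (not_lt.2 hi.1)
    rw [Finset.sum_congr rfl hone, Finset.sum_const, Nat.card_Ico, Nat.sub_sub_self hζn,
      nsmul_eq_mul, mul_one]
  rw [h1, h2, zero_add]

lemma comb0 {n ζ : ℕ} (hζ1 : 1 ≤ ζ) (θ : Fin n → ℝ) (hmono : Monotone θ)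
    (hlow : ∀ j, -π < θ j) (hhigh : ∀ j, θ j ≤ π)
    (hθsum : ∑ j, θ j = 2 * π * ζ) (K : Fin n → ℤ)
    (t b : Fin n → ℝ)
    (ht : ∀ j, t j = if (j : ℕ) < n - ζ then θ j else θ j - 2*π)
    (hb : ∀ j, b j = θ j - 2*π*(K j : ℝ))
    (hbsum : ∑ j, b j = 0) :
    (∑ j, (t j)^2) ≤ (∑ j, (b j)^2) ∧
    ((∑ j, (b j)^2) = (∑ j, (t j)^2) →
      Multiset.map b Finset.univ.val = Multiset.map t Finset.univ.val) := by
  have hπ := Real.pi_pos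
  -- ζ ≤ n
  have h2ζ : 2 * (ζ:ℝ) ≤ n := by
    have h1 : ∑ j, θ j ≤ ∑ _j : Fin n, π := Finset.sum_le_sum (fun j _ => hhigh j)
    rw [Finset.sum_const, Finset.card_univ, Fintype.card_fin, nsmul_eq_mul] at h1
    rw [hθsum] at h1
    nlinarith
  have hζn : ζ ≤ n := by
    have : (ζ:ℝ) ≤ (n:ℝ) := by nlinarith [Nat.cast_nonneg (α := ℝ) ζ]
    exact_mod_cast this
  have hpn : n - ζ < n := by omega
  set p : Fin n := ⟨n - ζ, hpn⟩ with hp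
  -- integer bookkeeping
  set mst : Fin n → ℤ := fun j => if (j : ℕ) < n - ζ then 0 else 1 with hmst
  set d : Fin n → ℤ := fun j => K j - mst j with hd
  have htm : ∀ j, t j = θ j - 2*π*((mst j : ℤ) : ℝ) := by
    intro j
    by_cases hj : (j : ℕ) < n - ζ <;> simp [ht, hmst, hj]
  have hbt : ∀ j, b j = t j - 2*π*((d j : ℤ) : ℝ) := by
    intro j
    rw [htm, hb, hd]
    push_cast
    ring
  have hsum_mst : ∑ j, ((mst j : ℤ) : ℝ) = ζ := by
    have := sum_indicator n ζ hζn
    rw [← this]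
    apply Finset.sum_congr rfl
    intro j _
    by_cases hj : (j : ℕ) < n - ζ <;> simp [hmst, hj]
  have hKsum : ∑ j, ((K j : ℤ) : ℝ) = ζ := by
    have h1 : ∑ j, b j = ∑ j, θ j - 2*π*(∑ j, ((K j:ℤ):ℝ)) := by
      rw [Finset.mul_sum, ← Finset.sum_sub_distrib]
      exact Finset.sum_congr rfl (fun j _ => hb j)
    rw [hbsum, hθsum] at h1
    have h5 : 2*π*((ζ:ℝ) - ∑ j, ((K j:ℤ):ℝ)) = 0 := by
      have : 2*π*((ζ:ℝ) - ∑ j, ((K j:ℤ):ℝ)) = 2*π*(ζ:ℝ) - 2*π*(∑ j, ((K j:ℤ):ℝ)) := by ring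
      rw [this]
      linarith
    rcases mul_eq_zero.1 h5 with h6 | h6
    · exfalso
      have : (2:ℝ)*π ≠ 0 := by positivity
      exact this h6
    · linarith
  have hdsum : ∑ j, ((d j : ℤ) : ℝ) = 0 := by
    have : ∑ j, ((d j : ℤ):ℝ) = ∑ j, ((K j:ℤ):ℝ) - ∑ j, ((mst j:ℤ):ℝ) := by
      rw [← Finset.sum_sub_distrib]
      apply Finset.sum_congr rfl
      intro j _
      rw [hd]
      push_cast
      ring
    rw [this, hKsum, hsum_mst, sub_self]
  -- the linear shift
  set c : Fin n → ℝ := fun j => t j + (π - θ p) with hc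
  have hcb : ∀ j, |c j| ≤ π := by
    intro j
    rw [abs_le]
    by_cases hj : (j : ℕ) < n - ζ
    · have h1 : θ j ≤ θ p := hmono (by rw [Fin.le_def]; exact le_of_lt hj)
      have h2 := hlow j
      have h3 := hhigh p
      constructor <;> simp only [hc, ht j, if_pos hj] <;> linarith
    · have h1 : θ p ≤ θ j := hmono (by rw [Fin.le_def]; show n - ζ ≤ (j : ℕ); omega)
      have h2 := hhigh j
      have h3 := hlow p
      constructor <;> simp only [hc, ht j, if_neg hj] <;> linarith
  set g : Fin n → ℝ := fun j => π * ((d j : ℤ):ℝ)^2 - c j * ((d j : ℤ):ℝ) with hg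
  have hg0 : ∀ j, 0 ≤ g j := by
    intro j
    rcases eq_or_ne (d j) 0 with h | h
    · simp [hg, h]
    · have h1 : (1:ℝ) ≤ |((d j : ℤ):ℝ)| := by
        rw [← Int.cast_abs]
        exact_mod_cast Int.one_le_abs h
      have h2 := hcb j
      have h3 : c j * ((d j:ℤ):ℝ) ≤ π * |((d j:ℤ):ℝ)| :=
        calc c j * ((d j:ℤ):ℝ) ≤ |c j * ((d j:ℤ):ℝ)| := le_abs_self _
          _ = |c j| * |((d j:ℤ):ℝ)| := abs_mul _ _
          _ ≤ π * |((d j:ℤ):ℝ)| := mul_le_mul_of_nonneg_right h2 (abs_nonneg _)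
      have h4 : π * |((d j:ℤ):ℝ)| ≤ π * ((d j:ℤ):ℝ)^2 := by
        have h5 : |((d j:ℤ):ℝ)| ≤ ((d j:ℤ):ℝ)^2 := by
          nlinarith [sq_abs ((d j:ℤ):ℝ), abs_nonneg ((d j:ℤ):ℝ)]
        exact mul_le_mul_of_nonneg_left h5 (le_of_lt hπ)
      simp only [hg]
      linarith
  have hid : ∀ j, (b j)^2 = (t j)^2 + 4*π*(g j) + (4*π*(π - θ p))*((d j:ℤ):ℝ) := by
    intro j
    rw [hbt j]
    simp only [hg, hc]
    ring
  have hsum_eq : ∑ j, (b j)^2 = ∑ j, (t j)^2 + 4*π*(∑ j, g j) := by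
    rw [Finset.sum_congr rfl (fun j _ => hid j), Finset.sum_add_distrib, Finset.sum_add_distrib,
      ← Finset.mul_sum, ← Finset.mul_sum, hdsum, mul_zero, add_zero]
  have hgsum : 0 ≤ ∑ j, g j := Finset.sum_nonneg (fun j _ => hg0 j)
  constructor
  · nlinarith
  · intro heq
    have hgzero : ∑ j, g j = 0 := by nlinarith
    have hgj : ∀ j, g j = 0 := by
      intro j
      have := (Finset.sum_eq_zero_iff_of_nonneg (fun j _ => hg0 j)).1 hgzero j (Finset.mem_univ j)
      exact this
    have hclass : ∀ j, (d j = 0) ∨ (d j = 1 ∧ t j = θ p) ∨ (d j = -1 ∧ t j = θ p - 2*π) := by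
      intro j
      rcases eq_or_ne (d j) 0 with h | h
      · exact Or.inl h
      · right
        have hdne : ((d j:ℤ):ℝ) ≠ 0 := Int.cast_ne_zero.2 h
        have hfac : (π * ((d j:ℤ):ℝ) - c j) * ((d j:ℤ):ℝ) = 0 := by
          have := hgj j
          simp only [hg] at this
          nlinarith [this]
        have hcd : c j = π * ((d j:ℤ):ℝ) := by
          rcases mul_eq_zero.1 hfac with h1 | h1
          · linarith
          · exact absurd h1 hdne
        have habs : |((d j:ℤ):ℝ)| ≤ 1 := by
          have h2 := hcb j
          rw [hcd, abs_mul, abs_of_pos hπ] at h2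
          nlinarith
        have hd1 : d j = 1 ∨ d j = -1 := by
          have h3 : |d j| ≤ 1 := by
            have h4 : ((|d j| : ℤ) : ℝ) ≤ 1 := by rw [Int.cast_abs]; exact habs
            exact_mod_cast h4
          rw [abs_le] at h3
          omega
        rcases hd1 with h1 | h1
        · left
          refine ⟨h1, ?_⟩
          have h2 : c j = π := by rw [hcd, h1]; simp
          simp only [hc] at h2
          linarith
        · right
          refine ⟨h1, ?_⟩
          have h2 : c j = -π := by rw [hcd, h1]; simp
          simp only [hc] at h2
          linarith
    classical
    set P : Finset (Fin n) := Finset.univ.filter (fun j => d j = 1) with hP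
    set N : Finset (Fin n) := Finset.univ.filter (fun j => d j = -1) with hN
    have hdsumZ : ∑ j, d j = 0 := by
      have h9 : ((∑ j, d j : ℤ) : ℝ) = 0 := by
        push_cast
        exact hdsum
      exact_mod_cast h9
    have hsplit1 := Finset.sum_filter_add_sum_filter_not Finset.univ (fun j => d j = 1) d
    have hsplit2 := Finset.sum_filter_add_sum_filter_not
      (Finset.univ.filter (fun j => ¬ d j = 1)) (fun j => d j = -1) d
    have hA : ∑ j ∈ P, d j = (P.card : ℤ) := by
      rw [Finset.sum_congr rfl (fun j hj => (Finset.mem_filter.1 hj).2)]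
      simp [hP]
    have hNeq : (Finset.univ.filter (fun j => ¬ d j = 1)).filter (fun j => d j = -1) = N := by
      rw [Finset.filter_filter]
      apply Finset.filter_congr
      intro j _
      constructor
      · rintro ⟨_, h2⟩; exact h2
      · intro h2; exact ⟨by omega, h2⟩
    have hB : ∑ j ∈ (Finset.univ.filter (fun j => ¬ d j = 1)).filter (fun j => d j = -1), d j
        = -(N.card : ℤ) := by
      rw [hNeq, Finset.sum_congr rfl (fun j hj => (Finset.mem_filter.1 hj).2)]
      simp [hN]
    have hC : ∑ j ∈ (Finset.univ.filter (fun j => ¬ d j = 1)).filter (fun j => ¬ d j = -1), d j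
        = 0 := by
      apply Finset.sum_eq_zero
      intro j hj
      rw [Finset.mem_filter, Finset.mem_filter] at hj
      rcases hclass j with h0 | ⟨h1, _⟩ | ⟨h1, _⟩
      · exact h0
      · exact absurd h1 hj.1.2
      · exact absurd h1 hj.2
    have hPN : P.card = N.card := by
      rw [hB, hC] at hsplit2
      rw [← hsplit2, hA] at hsplit1
      rw [hdsumZ] at hsplit1
      omega
    have hPNdisj : ∀ j, j ∈ P → j ∈ N → False := by
      intro j h1 h2
      rw [hP, Finset.mem_filter] at h1
      rw [hN, Finset.mem_filter] at h2
      omega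
    set e : {x // x ∈ P} ≃ {x // x ∈ N} := Finset.equivOfCardEq hPN with he
    set ρfun : Fin n → Fin n := fun j =>
      if h : j ∈ P then (e ⟨j, h⟩ : Fin n)
      else if h' : j ∈ N then (e.symm ⟨j, h'⟩ : Fin n) else j with hρ
    have hinvol : Function.Involutive ρfun := by
      intro j
      by_cases h : j ∈ P
      · have h1 : ((e ⟨j, h⟩ : {x // x ∈ N}) : Fin n) ∈ N := (e ⟨j, h⟩).2
        have h2 : ¬ (((e ⟨j, h⟩ : {x // x ∈ N}) : Fin n) ∈ P) := fun hc => hPNdisj _ hc h1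
        simp only [hρ, dif_pos h, dif_neg h2, dif_pos h1]
        rw [Subtype.coe_eta, Equiv.symm_apply_apply]
      · by_cases h' : j ∈ N
        · have h1 : ((e.symm ⟨j, h'⟩ : {x // x ∈ P}) : Fin n) ∈ P := (e.symm ⟨j, h'⟩).2
          simp only [hρ, dif_neg h, dif_pos h', dif_pos h1]
          rw [Subtype.coe_eta, Equiv.apply_symm_apply]
        · simp only [hρ, dif_neg h, dif_neg h']
    have htvalP : ∀ j ∈ P, t j = θ p := by
      intro j hj
      have h1 : d j = 1 := (Finset.mem_filter.1 hj).2
      rcases hclass j with h0 | ⟨_, h2⟩ | ⟨h2, _⟩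
      · omega
      · exact h2
      · omega
    have htvalN : ∀ j ∈ N, t j = θ p - 2*π := by
      intro j hj
      have h1 : d j = -1 := (Finset.mem_filter.1 hj).2
      rcases hclass j with h0 | ⟨h2, _⟩ | ⟨_, h2⟩
      · omega
      · omega
      · exact h2
    have hbρ : ∀ j, b j = t (ρfun j) := by
      intro j
      by_cases h : j ∈ P
      · have hd1 : d j = 1 := (Finset.mem_filter.1 h).2
        have hmem : ρfun j ∈ N := by
          simp only [hρ, dif_pos h]
          exact (e ⟨j, h⟩).2
        rw [hbt j, hd1, htvalN _ hmem, htvalP j h]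
        push_cast
        ring
      · by_cases h' : j ∈ N
        · have hd1 : d j = -1 := (Finset.mem_filter.1 h').2
          have hmem : ρfun j ∈ P := by
            simp only [hρ, dif_neg h, dif_pos h']
            exact (e.symm ⟨j, h'⟩).2
          rw [hbt j, hd1, htvalP _ hmem, htvalN j h']
          push_cast
          ring
        · have hd0 : d j = 0 := by
            rcases hclass j with h0 | ⟨h1, _⟩ | ⟨h1, _⟩
            · exact h0
            · exact absurd (show j ∈ P by rw [hP, Finset.mem_filter]; exact ⟨Finset.mem_univ _, h1⟩) h
            · exact absurd (show j ∈ N by rw [hN, Finset.mem_filter]; exact ⟨Finset.mem_univ _, h1⟩) h'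
          have hρj : ρfun j = j := by simp only [hρ, dif_neg h, dif_neg h']
          rw [hbt j, hd0, hρj]
          push_cast
          ring
    have hmapeq : Multiset.map b Finset.univ.val
        = Multiset.map (fun j => t (hinvol.toPerm ρfun j)) Finset.univ.val := by
      apply Multiset.map_congr rfl
      intro j _
      exact hbρ j
    rw [hmapeq]
    exact map_comp_perm t (hinvol.toPerm ρfun)



lemma key {n ζ : ℕ} (hζ1 : 1 ≤ ζ) (Q : Matrix (Fin n) (Fin n) ℂ) (μ : Fin n → ℂ)
    (hμ : Q.charpoly.roots = Multiset.map μ Finset.univ.val)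
    (hmono : Monotone fun j => (μ j).arg)
    (hζs : (∑ j, (μ j).arg) = 2 * π * ζ)
    (t : Fin n → ℝ) (ht : ∀ j, t j = if (j : ℕ) < n - ζ then (μ j).arg else (μ j).arg - 2*π)
    (X : Matrix (Fin n) (Fin n) ℂ) (hXsu : X ∈ suSet n) (hexp : NormedSpace.exp X = Q) :
    (∃ X' ∈ suSet n, NormedSpace.exp X' = Q ∧ frobSq X' = ∑ j, (t j)^2) ∧
    (∑ j, (t j)^2) ≤ frobSq X ∧
    (frobSq X = (∑ j, (t j)^2) →
      X.charpoly.roots = Multiset.map (fun j => ((t j : ℝ) : ℂ) * Complex.I) Finset.univ.val) ∧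
    (X.charpoly.roots = Multiset.map (fun j => ((t j : ℝ) : ℂ) * Complex.I) Finset.univ.val →
      frobSq X = ∑ j, (t j)^2) := by
  obtain ⟨hskew, htr⟩ := hXsu
  obtain ⟨U, a, hU1, hU2, hXd⟩ := skew_decomp hskew
  have hπ := Real.pi_pos
  -- ζ ≤ n
  have hζn : ζ ≤ n := by
    have h1 : ∑ j, (μ j).arg ≤ ∑ _j : Fin n, π :=
      Finset.sum_le_sum (fun j _ => Complex.arg_le_pi (μ j))
    rw [Finset.sum_const, Finset.card_univ, Fintype.card_fin, nsmul_eq_mul, hζs] at h1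
    have h2 : (ζ:ℝ) ≤ (n:ℝ) := by nlinarith [Nat.cast_nonneg (α := ℝ) ζ]
    exact_mod_cast h2
  -- eigen-structure of X
  have hXroots : X.charpoly.roots
      = Multiset.map (fun j => ((a j : ℝ) : ℂ) * Complex.I) Finset.univ.val := by
    rw [hXd]; exact cd_charpoly U hU1 _
  have hfrob : frobSq X = ∑ j, (a j)^2 := by
    show (Matrix.trace (X * Xᴴ)).re = _
    rw [hXd]
    exact cd_frobSq U hU2 a
  have hasum : ∑ j, a j = 0 := by
    have h1 : ∑ j, ((a j : ℂ) * Complex.I) = 0 := by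
      rw [← cd_trace U hU2 (fun j => (a j : ℂ) * Complex.I), ← hXd]
      exact htr
    have h2 : ((∑ j, a j : ℝ) : ℂ) * Complex.I = 0 := by
      push_cast
      rw [Finset.sum_mul]
      exact h1
    have h3 : ((∑ j, a j : ℝ) : ℂ) = 0 := by
      rcases mul_eq_zero.1 h2 with h | h
      · exact h
      · exact absurd h Complex.I_ne_zero
    exact_mod_cast h3
  have hQd : Q = U * Matrix.diagonal (fun j => Complex.exp ((a j : ℂ) * Complex.I)) * Uᴴ := by
    rw [← hexp, hXd, cd_exp U hU1 hU2]
  have hQroots : Multiset.map (fun j => Complex.exp ((a j : ℂ) * Complex.I)) Finset.univ.val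
      = Multiset.map μ Finset.univ.val := by
    rw [← hμ, hQd, cd_charpoly U hU1]
  have habs : ∀ j, ‖μ j‖ = 1 := by
    intro j
    have h1 : μ j ∈ Multiset.map μ Finset.univ.val :=
      Multiset.mem_map_of_mem μ (Finset.mem_univ j)
    rw [← hQroots] at h1
    obtain ⟨l, _, hl⟩ := Multiset.mem_map.1 h1
    rw [← hl, Complex.norm_exp]
    have : ((a l : ℂ) * Complex.I).re = 0 := by simp
    rw [this, Real.exp_zero]
  have hμexp : ∀ j, Complex.exp (((μ j).arg : ℂ) * Complex.I) = μ j := by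
    intro j
    have h1 := Complex.norm_mul_exp_arg_mul_I (μ j)
    rw [habs j] at h1
    simpa using h1
  have htexp : ∀ j, Complex.exp ((t j : ℂ) * Complex.I) = μ j := by
    intro j
    rw [ht j]
    by_cases hj : (j : ℕ) < n - ζ
    · rw [if_pos hj]; exact hμexp j
    · rw [if_neg hj]
      push_cast
      rw [sub_mul, Complex.exp_sub, hμexp j]
      rw [show ((2:ℂ) * (π:ℂ) * Complex.I) = 2 * π * Complex.I from rfl,
        Complex.exp_two_pi_mul_I, div_one]
  have hmm : Multiset.map (fun j => Complex.exp ((a j : ℂ) * Complex.I)) Finset.univ.val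
      = Multiset.map (fun j => Complex.exp ((t j : ℂ) * Complex.I)) Finset.univ.val := by
    rw [hQroots]
    symm
    apply Multiset.map_congr rfl
    intro j _
    exact htexp j
  obtain ⟨σ, hσ⟩ := exists_comp_perm_complex _ _ hmm
  have hstep : ∀ j, ∃ m : ℤ, a j = t (σ j) + 2*π*(m : ℝ) := by
    intro j
    obtain ⟨mm, hmm2⟩ := Complex.exp_eq_exp_iff_exists_int.1 (hσ j)
    refine ⟨mm, ?_⟩
    have h2 : ((a j : ℂ)) * Complex.I = ((t (σ j) + 2*π*(mm:ℝ) : ℝ) : ℂ) * Complex.I := by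
      rw [hmm2]; push_cast; ring
    have h1 : ((a j : ℝ) : ℂ) = ((t (σ j) + 2*π*(mm:ℝ) : ℝ) : ℂ) :=
      mul_right_cancel₀ Complex.I_ne_zero h2
    exact_mod_cast h1
  choose mfun hmfun using hstep
  set b : Fin n → ℝ := fun l => a (σ.symm l) with hbdef
  set K : Fin n → ℤ := fun l => (if (l : ℕ) < n - ζ then 0 else 1) - mfun (σ.symm l) with hKdef
  have hbK : ∀ l, b l = (μ l).arg - 2*π*((K l : ℤ) : ℝ) := by
    intro l
    have h1 : a (σ.symm l) = t (σ (σ.symm l)) + 2*π*(mfun (σ.symm l) : ℝ) := hmfun (σ.symm l)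
    rw [Equiv.apply_symm_apply] at h1
    rw [hbdef]
    simp only []
    rw [h1, ht l, hKdef]
    by_cases hl : (l : ℕ) < n - ζ
    · simp only [if_pos hl]
      push_cast
      ring
    · simp only [if_neg hl]
      push_cast
      ring
  have hbsum : ∑ l, b l = 0 := by
    rw [hbdef]
    rw [show ∑ l, a (σ.symm l) = ∑ j, a j from Equiv.sum_comp σ.symm a]
    exact hasum
  have hcomb := comb0 hζ1 (fun j => (μ j).arg) hmono (fun j => Complex.neg_pi_lt_arg (μ j))
    (fun j => Complex.arg_le_pi (μ j)) hζs K t b ht hbK hbsum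
  have hsumsq : ∑ l, (b l)^2 = ∑ j, (a j)^2 := by
    rw [hbdef]
    exact Equiv.sum_comp σ.symm (fun j => (a j)^2)
  have hmapb : Multiset.map b Finset.univ.val = Multiset.map a Finset.univ.val :=
    map_comp_perm a σ.symm
  -- sum of t
  have htsum : ∑ j, t j = 0 := by
    have h1 : ∀ j : Fin n, t j = (μ j).arg - 2*π*(if (j : ℕ) < n - ζ then (0:ℝ) else 1) := by
      intro j
      rw [ht j]
      by_cases hj : (j : ℕ) < n - ζ
      · simp [hj]
      · simp only [if_neg hj]
        ring
    rw [Finset.sum_congr rfl (fun j _ => h1 j), Finset.sum_sub_distrib, ← Finset.mul_sum,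
      sum_indicator n ζ hζn, hζs]
    ring
  refine ⟨?_, ?_, ?_, ?_⟩
  · -- existence of minimizer
    refine ⟨U * Matrix.diagonal (fun j => ((t (σ j) : ℝ) : ℂ) * Complex.I) * Uᴴ, ?_, ?_, ?_⟩
    · refine ⟨cd_skew U _, ?_⟩
      rw [cd_trace U hU2]
      have h2 : ∑ j, ((t (σ j) : ℝ) : ℂ) * Complex.I
          = ((∑ j, t (σ j) : ℝ) : ℂ) * Complex.I := by
        push_cast
        rw [Finset.sum_mul]
      rw [h2, show ∑ j, t (σ j) = ∑ j, t j from Equiv.sum_comp σ t, htsum]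
      simp
    · rw [cd_exp U hU1 hU2,
        show (fun j => Complex.exp (((t (σ j) : ℝ) : ℂ) * Complex.I))
          = (fun j => Complex.exp (((a j : ℝ) : ℂ) * Complex.I)) from
            funext (fun j => (hσ j).symm),
        ← cd_exp U hU1 hU2, ← hXd, hexp]
    · simp only [frobSq]
      rw [cd_frobSq U hU2 (fun j => t (σ j))]
      exact Equiv.sum_comp σ (fun j => (t j)^2)
  · -- lower bound
    rw [hfrob, ← hsumsq]
    exact hcomb.1
  · -- equality case
    intro hfr
    have h1 : ∑ l, (b l)^2 = ∑ j, (t j)^2 := by rw [hsumsq, ← hfrob, hfr]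
    have h2 := hcomb.2 h1
    rw [hmapb] at h2
    rw [hXroots]
    have h3 := congrArg (Multiset.map (fun r : ℝ => ((r : ℝ) : ℂ) * Complex.I)) h2
    rw [Multiset.map_map, Multiset.map_map] at h3
    exact h3
  · -- value from roots
    intro hroots
    have h1 : Multiset.map (fun j => ((a j : ℝ) : ℂ) * Complex.I) Finset.univ.val
        = Multiset.map (fun j => ((t j : ℝ) : ℂ) * Complex.I) Finset.univ.val := by
      rw [← hXroots, hroots]
    have h2 := congrArg (fun s => ((Multiset.map (fun z : ℂ => (z.im)^2) s)).sum) h1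
    simp only [Multiset.map_map, Function.comp] at h2
    have h3 : ∀ r : ℝ, (((r : ℂ) * Complex.I).im)^2 = r^2 := by
      intro r; simp
    rw [hfrob]
    calc ∑ j, (a j)^2 = (Multiset.map (fun j => (((a j : ℂ) * Complex.I).im)^2)
          Finset.univ.val).sum := by
          rw [Finset.sum_eq_multiset_sum]
          congr 1
          apply Multiset.map_congr rfl
          intro j _
          rw [h3]
      _ = (Multiset.map (fun j => (((t j : ℂ) * Complex.I).im)^2) Finset.univ.val).sum := h2
      _ = ∑ j, (t j)^2 := by
          rw [Finset.sum_eq_multiset_sum]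
          congr 1
          apply Multiset.map_congr rfl
          intro j _
          rw [h3]


end Stmt11Aux

open Stmt11Aux

/-- if the eigenvalues are ordered by increasing principal argument and
`ζ := ζ(Q) ≥ 1`, then `Θ(Q)` is the set of `su_n`-logarithms of `Q` whose multiset of
eigenvalues is `{arg(μ_1)·i, …, arg(μ_{n−ζ})·i, (arg(μ_{n−ζ+1})−2π)·i, …, (arg(μ_n)−2π)·i}`. -/
theorem stmt_11 (n : ℕ) (hn : 2 ≤ n) (Q : Matrix (Fin n) (Fin n) ℂ)
    (hQ : Q ∈ SpecialUnitary n) (μ : Fin n → ℂ)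
    (hμ : Q.charpoly.roots = Multiset.map μ Finset.univ.val)
    (hmono : Monotone fun j => (μ j).arg)
    (ζ : ℕ) (hζ1 : 1 ≤ ζ) (hζ : (∑ j, (μ j).arg) = 2 * π * ζ) :
    ThetaQ Q = {X | X ∈ suSet n ∧ NormedSpace.exp X = Q ∧
      X.charpoly.roots =
        Multiset.map (fun (j : Fin n) =>
          (((if (j : ℕ) < n - ζ then (μ j).arg else (μ j).arg - 2 * π) : ℝ) : ℂ)
            * Complex.I) Finset.univ.val} := by
  classical
  set t : Fin n → ℝ := fun j => if (j : ℕ) < n - ζ then (μ j).arg else (μ j).arg - 2*π with htdef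
  have ht : ∀ j, t j = if (j : ℕ) < n - ζ then (μ j).arg else (μ j).arg - 2*π := fun j => rfl
  have hfun : (fun (j : Fin n) =>
      (((if (j : ℕ) < n - ζ then (μ j).arg else (μ j).arg - 2 * π) : ℝ) : ℂ) * Complex.I)
      = fun j => ((t j : ℝ) : ℂ) * Complex.I := funext fun j => rfl
  have hmQ : ∀ Y, Y ∈ suSet n → NormedSpace.exp Y = Q → mQ Q = ∑ j, (t j)^2 := by
    intro Y hYsu hYexp
    obtain ⟨⟨X', hX'su, hX'exp, hX'fr⟩, hlow, _, _⟩ :=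
      key hζ1 Q μ hμ hmono hζ t ht Y hYsu hYexp
    unfold mQ
    apply le_antisymm
    · apply csInf_le
      · refine ⟨∑ j, (t j)^2, ?_⟩
        rintro r ⟨Z, hZsu, hZexp, rfl⟩
        exact (key hζ1 Q μ hμ hmono hζ t ht Z hZsu hZexp).2.1
      · exact ⟨X', hX'su, hX'exp, hX'fr⟩
    · apply le_csInf
      · exact ⟨frobSq Y, Y, hYsu, hYexp, rfl⟩
      · rintro r ⟨Z, hZsu, hZexp, rfl⟩
        exact (key hζ1 Q μ hμ hmono hζ t ht Z hZsu hZexp).2.1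
  ext X
  simp only [ThetaQ, Set.mem_setOf_eq, hfun]
  constructor
  · rintro ⟨hXsu, hexp, hfr⟩
    refine ⟨hXsu, hexp, ?_⟩
    obtain ⟨_, _, heqcase, _⟩ := key hζ1 Q μ hμ hmono hζ t ht X hXsu hexp
    exact heqcase (by rw [hfr, hmQ X hXsu hexp])
  · rintro ⟨hXsu, hexp, hroots⟩
    obtain ⟨_, _, _, hval⟩ := key hζ1 Q μ hμ hmono hζ t ht X hXsu hexp
    exact ⟨hXsu, hexp, by rw [hval hroots, hmQ X hXsu hexp]⟩
end
end

section
/- Let n ≥ 2, let Q ∈ SU_n with ζ(Q) := (1/(2π))·Σ_{j=1}^n arg(μ_j) ≥ 0 (where μ_1, …, μ_n are the eigenvalues of Q), and let X₀ ∈ Θ(Q). Then Θ(Q) = { U·X₀·Uᴴ : U an n×n unitary matrix with U·Q = Q·U }; i.e., Θ(Q) is the orbit of any of its elements under conjugation by the unitary matrices commuting with Q. -/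
noncomputable section

open scoped Real Matrix
open Matrix

namespace Stmt14

open Complex

variable {n : ℕ}

/-- diagonal matrix with entries `t j * I`. -/
def dm (t : Fin n → ℝ) : Matrix (Fin n) (Fin n) ℂ :=
  Matrix.diagonal fun j => (t j : ℂ) * Complex.I

lemma dm_conjTranspose (t : Fin n → ℝ) : (dm t)ᴴ = -dm t := by
  ext i j
  by_cases h : i = j
  · simp [dm, Matrix.diagonal_apply, Matrix.conjTranspose_apply, h, Complex.ext_iff]
  · simp [dm, Matrix.diagonal_apply, Matrix.conjTranspose_apply, h, Ne.symm h]

lemma conjT_conj (V A : Matrix (Fin n) (Fin n) ℂ) : (V * A * Vᴴ)ᴴ = V * Aᴴ * Vᴴ := by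
  simp [Matrix.conjTranspose_mul, mul_assoc]

lemma trace_conj {V : Matrix (Fin n) (Fin n) ℂ} (hV' : Vᴴ * V = 1)
    (A : Matrix (Fin n) (Fin n) ℂ) : Matrix.trace (V * A * Vᴴ) = Matrix.trace A := by
  rw [Matrix.trace_mul_cycle, hV', one_mul]

lemma conj_mul {V : Matrix (Fin n) (Fin n) ℂ} (hV' : Vᴴ * V = 1)
    (A B : Matrix (Fin n) (Fin n) ℂ) :
    (V * A * Vᴴ) * (V * B * Vᴴ) = V * (A * B) * Vᴴ := by
  have : V * A * Vᴴ * (V * B * Vᴴ) = V * A * (Vᴴ * V) * B * Vᴴ := by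
    simp only [mul_assoc]
  rw [this, hV', mul_one]
  simp only [mul_assoc]

lemma exp_conj {V : Matrix (Fin n) (Fin n) ℂ} (hV : V * Vᴴ = 1)
    (A : Matrix (Fin n) (Fin n) ℂ) :
    NormedSpace.exp (V * A * Vᴴ) = V * NormedSpace.exp A * Vᴴ := by
  have hU : IsUnit V := by
    have := invertibleOfRightInverse V Vᴴ hV
    exact isUnit_of_invertible V
  have hinv : V⁻¹ = Vᴴ := Matrix.inv_eq_right_inv hV
  rw [← hinv]
  exact Matrix.exp_conj V A hU

lemma exp_dm (t : Fin n → ℝ) :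
    NormedSpace.exp (dm t) = Matrix.diagonal fun j => Complex.exp ((t j : ℂ) * Complex.I) := by
  rw [dm, Matrix.exp_diagonal]
  funext j
  rw [Pi.exp_def]
  rw [← Complex.exp_eq_exp_ℂ]


lemma mem_su {V : Matrix (Fin n) (Fin n) ℂ} (hV : V * Vᴴ = 1) (t : Fin n → ℝ)
    (ht : ∑ j, t j = 0) : V * dm t * Vᴴ ∈ suSet n := by
  have hV' : Vᴴ * V = 1 := mul_eq_one_comm.mp hV
  constructor
  · rw [conjT_conj, dm_conjTranspose]
    simp [Matrix.neg_mul, Matrix.mul_neg]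
  · rw [trace_conj hV']
    rw [dm, Matrix.trace_diagonal]
    have : (∑ j, (t j : ℂ) * Complex.I) = ((∑ j, t j : ℝ) : ℂ) * Complex.I := by
      push_cast
      rw [Finset.sum_mul]
    rw [this, ht]
    simp

lemma trace_conj_dm {V : Matrix (Fin n) (Fin n) ℂ} (hV' : Vᴴ * V = 1) (t : Fin n → ℝ) :
    Matrix.trace (V * dm t * Vᴴ) = ((∑ j, t j : ℝ) : ℂ) * Complex.I := by
  rw [trace_conj hV', dm, Matrix.trace_diagonal]
  push_cast
  rw [Finset.sum_mul]

lemma frobSq_conj_dm {V : Matrix (Fin n) (Fin n) ℂ} (hV : V * Vᴴ = 1) (t : Fin n → ℝ) :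
    frobSq (V * dm t * Vᴴ) = ∑ j, (t j) ^ 2 := by
  have hV' : Vᴴ * V = 1 := mul_eq_one_comm.mp hV
  unfold frobSq
  rw [conjT_conj, dm_conjTranspose, conj_mul hV']
  have hdd : dm t * (-(dm t)) = Matrix.diagonal fun j => ((t j : ℝ) ^ 2 : ℂ) := by
    rw [Matrix.mul_neg, dm, Matrix.diagonal_mul_diagonal]
    ext i j
    by_cases h : i = j
    · subst h
      simp only [Matrix.neg_apply, Matrix.diagonal_apply_eq]
      have : ((t i : ℂ)) * Complex.I * ((t i : ℂ) * Complex.I) = -((t i : ℂ) ^ 2) := by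
        rw [mul_mul_mul_comm, Complex.I_mul_I]
        ring
      rw [this, neg_neg]
    · simp [Matrix.diagonal_apply_ne _ h]
  rw [hdd, trace_conj hV', Matrix.trace_diagonal]
  have : (∑ j, ((t j : ℝ) ^ 2 : ℂ)) = ((∑ j, (t j) ^ 2 : ℝ) : ℂ) := by push_cast; rfl
  rw [this, Complex.ofReal_re]

lemma charpoly_conj {V W : Matrix (Fin n) (Fin n) ℂ} (A : Matrix (Fin n) (Fin n) ℂ)
    (h1 : V * W = 1) : (V * A * W).charpoly = A.charpoly := by
  set f : Matrix (Fin n) (Fin n) ℂ →+* Matrix (Fin n) (Fin n) (Polynomial ℂ) :=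
    (Polynomial.C : ℂ →+* Polynomial ℂ).mapMatrix with hf
  have hVW : f V * f W = 1 := by rw [← _root_.map_mul, h1, _root_.map_one]
  have hcomm : ∀ M : Matrix (Fin n) (Fin n) (Polynomial ℂ),
      Matrix.scalar (Fin n) (Polynomial.X : Polynomial ℂ) * M
        = M * Matrix.scalar (Fin n) (Polynomial.X : Polynomial ℂ) := fun M =>
    (Matrix.scalar_commute _ (fun r => Commute.all _ r) M).eq
  have key : Matrix.charmatrix (V * A * W) = f V * Matrix.charmatrix A * f W := by
    unfold Matrix.charmatrix
    rw [_root_.map_mul, _root_.map_mul, Matrix.mul_sub, Matrix.sub_mul]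
    congr 1
    rw [← hcomm (f V), mul_assoc, hVW, mul_one]
  rw [Matrix.charpoly, Matrix.charpoly, key, Matrix.det_mul, Matrix.det_mul]
  have h3 : (f V).det * (f W).det = 1 := by
    rw [← Matrix.det_mul, hVW, Matrix.det_one]
  calc (f V).det * A.charmatrix.det * (f W).det
      = (f V).det * (f W).det * A.charmatrix.det := by ring
    _ = A.charmatrix.det := by rw [h3, one_mul]

lemma charpoly_diagonal (d : Fin n → ℂ) :
    (Matrix.diagonal d).charpoly = ∏ j, (Polynomial.X - Polynomial.C (d j)) := by
  rw [Matrix.charpoly]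
  have : Matrix.charmatrix (Matrix.diagonal d)
      = Matrix.diagonal fun j => (Polynomial.X - Polynomial.C (d j)) := by
    ext i j
    by_cases h : i = j
    · subst h; simp
    · simp [Matrix.charmatrix_apply_ne _ _ _ h, Matrix.diagonal_apply_ne _ h,
        Matrix.diagonal_apply_ne d h]
  rw [this, Matrix.det_diagonal]

lemma roots_conj_diag {V : Matrix (Fin n) (Fin n) ℂ} (hV : V * Vᴴ = 1) (d : Fin n → ℂ) :
    (V * Matrix.diagonal d * Vᴴ).charpoly.roots = Multiset.map d Finset.univ.val := by
  rw [charpoly_conj _ hV, charpoly_diagonal]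
  have : (∏ j, (Polynomial.X - Polynomial.C (d j)))
      = (Multiset.map (fun a => Polynomial.X - Polynomial.C a)
          (Multiset.map d Finset.univ.val)).prod := by
    rw [Multiset.map_map]
    rfl
  rw [this, Polynomial.roots_multiset_prod_X_sub_C]


lemma frobSq_nonneg (X : Matrix (Fin n) (Fin n) ℂ) : 0 ≤ frobSq X := by
  unfold frobSq Matrix.trace
  rw [Complex.re_sum]
  apply Finset.sum_nonneg
  intro i _
  simp only [Matrix.diag_apply, Matrix.mul_apply, Matrix.conjTranspose_apply]
  rw [Complex.re_sum]
  apply Finset.sum_nonneg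
  intro j _
  rw [Complex.star_def, Complex.mul_conj, Complex.ofReal_re]
  exact Complex.normSq_nonneg _

lemma skew_decomp (X : Matrix (Fin n) (Fin n) ℂ) (hX : X ∈ suSet n) :
    ∃ (V : Matrix (Fin n) (Fin n) ℂ) (t : Fin n → ℝ),
      V * Vᴴ = 1 ∧ (∑ j, t j) = 0 ∧ X = V * dm t * Vᴴ := by
  obtain ⟨hskew, htr⟩ := hX
  have hA : (Complex.I • X).IsHermitian := by
    unfold Matrix.IsHermitian
    rw [Matrix.conjTranspose_smul, hskew]
    simp [Complex.star_def, Complex.conj_I]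
  set V : Matrix (Fin n) (Fin n) ℂ := (hA.eigenvectorUnitary : Matrix (Fin n) (Fin n) ℂ) with hVdef
  have hV : V * Vᴴ = 1 := by
    have := (Matrix.mem_unitaryGroup_iff).mp hA.eigenvectorUnitary.2
    rwa [Matrix.star_eq_conjTranspose] at this
  have hV' : Vᴴ * V = 1 := mul_eq_one_comm.mp hV
  set t : Fin n → ℝ := fun j => -(hA.eigenvalues j) with ht
  have hXdec : X = V * dm t * Vᴴ := by
    have hspec := hA.spectral_theorem
    have h1 : X = (-Complex.I) • (Complex.I • X) := by
      rw [smul_smul]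
      simp
    rw [h1, hspec]
    rw [Unitary.conjStarAlgAut_apply, Matrix.star_eq_conjTranspose]
    have h2 : (-Complex.I) • ((V : Matrix (Fin n) (Fin n) ℂ)
        * Matrix.diagonal (RCLike.ofReal ∘ hA.eigenvalues) * Vᴴ)
        = V * ((-Complex.I) • Matrix.diagonal (RCLike.ofReal ∘ hA.eigenvalues)) * Vᴴ := by
      rw [Matrix.mul_smul, Matrix.smul_mul]
    rw [h2]
    congr 1
    congr 1
    ext i j
    by_cases h : i = j
    · subst h
      simp only [Matrix.smul_apply, Matrix.diagonal_apply_eq, dm, Function.comp_apply, ht,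
        smul_eq_mul, RCLike.ofReal, Complex.coe_algebraMap]
      push_cast
      ring
    · simp [Matrix.diagonal_apply_ne _ h, dm]
  refine ⟨V, t, hV, ?_, hXdec⟩
  have h3 : Matrix.trace X = ((∑ j, t j : ℝ) : ℂ) * Complex.I := by
    rw [hXdec]
    exact trace_conj_dm hV' t
  rw [htr] at h3
  have h4 : ((∑ j, t j : ℝ) : ℂ) = 0 := by
    rcases mul_eq_zero.mp h3.symm with h | h
    · exact h
    · exact absurd h Complex.I_ne_zero
  exact_mod_cast h4


lemma exists_perm {α : Type*} [DecidableEq α] (f g : Fin n → α)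
    (h : Multiset.map f Finset.univ.val = Multiset.map g Finset.univ.val) :
    ∃ σ : Equiv.Perm (Fin n), ∀ j, g (σ j) = f j := by
  have hcard : ∀ a : α, Fintype.card {i // f i = a} = Fintype.card {i // g i = a} := by
    intro a
    have hc := congrArg (Multiset.count a) h
    rw [Multiset.count_map, Multiset.count_map] at hc
    have h1 : ∀ (u : Fin n → α), Fintype.card {i // u i = a}
        = Multiset.card (Finset.univ.val.filter fun i => a = u i) := by
      intro u
      rw [Fintype.card_subtype]
      have : (Finset.univ.filter fun i => u i = a)
          = (Finset.univ.filter fun i => a = u i) := by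
        apply Finset.filter_congr
        intro x _
        exact eq_comm
      rw [this]
      rfl
    rw [h1 f, h1 g, hc]
  exact ⟨Equiv.ofFiberEquiv fun a => Fintype.equivOfCardEq (hcard a),
    fun j => Equiv.ofFiberEquiv_map _ j⟩

lemma key (N : ℕ) : ∀ (s t : Fin n → ℝ) (k : Fin n → ℤ),
    (∀ j, t j = s j + 2 * π * (k j : ℝ)) →
    (∑ j, s j) = (∑ j, t j) →
    (∀ i j, s i - s j ≤ 2 * π) → (∀ i j, t i - t j ≤ 2 * π) →
    (∑ j, (k j).natAbs) = N →
    Multiset.map t Finset.univ.val = Multiset.map s Finset.univ.val := by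
  induction N using Nat.strong_induction_on with
  | _ N IH =>
  intro s t k hk hsum hs ht hN
  by_cases h0 : ∀ j, k j = 0
  · have : t = s := funext fun j => by simp [hk j, h0 j]
    rw [this]
  · push_neg at h0
    obtain ⟨j₀, hj₀⟩ := h0
    have hπ := Real.pi_pos
    have hksum : (∑ j, k j) = 0 := by
      have h1 : (∑ j, t j) = (∑ j, s j) + 2 * π * (∑ j, (k j : ℝ)) := by
        rw [Finset.mul_sum, ← Finset.sum_add_distrib]
        exact Finset.sum_congr rfl fun j _ => hk j
      have h2 : 2 * π * (∑ j, (k j : ℝ)) = 0 := by linarith [hsum, h1]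
      have h3 : (∑ j, (k j : ℝ)) = 0 := by
        rcases mul_eq_zero.mp h2 with h | h
        · nlinarith
        · exact h
      have h4 : ((∑ j, k j : ℤ) : ℝ) = 0 := by push_cast; exact h3
      exact_mod_cast h4
    have hpos : ∃ p, 0 < k p := by
      by_contra hp
      push_neg at hp
      have hlt : (∑ j, k j) < ∑ _j : Fin n, (0 : ℤ) := by
        apply Finset.sum_lt_sum
        · exact fun i _ => hp i
        · exact ⟨j₀, Finset.mem_univ _, lt_of_le_of_ne (hp j₀) hj₀⟩
      simp [hksum] at hlt
    have hneg : ∃ q, k q < 0 := by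
      by_contra hq
      push_neg at hq
      have hlt : (∑ _j : Fin n, (0 : ℤ)) < ∑ j, k j := by
        apply Finset.sum_lt_sum
        · exact fun i _ => hq i
        · exact ⟨j₀, Finset.mem_univ _, lt_of_le_of_ne (hq j₀) (Ne.symm hj₀)⟩
      simp [hksum] at hlt
    obtain ⟨p, hp⟩ := hpos
    obtain ⟨q, hq⟩ := hneg
    have hpq : p ≠ q := fun h => absurd (h ▸ hp) (not_lt.mpr (le_of_lt hq))
    have e1 : t p - t q = s p - s q + 2 * π * ((k p : ℝ) - (k q : ℝ)) := by
      rw [hk p, hk q]; ring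
    have hkp1 : k p = 1 ∧ k q = -1 := by
      by_contra hc
      have h3 : (3 : ℤ) ≤ k p - k q := by omega
      have h3' : (3 : ℝ) ≤ (k p : ℝ) - (k q : ℝ) := by exact_mod_cast h3
      have := ht p q
      have := hs q p
      nlinarith
    have hkp : k p = 1 := hkp1.1
    have hkq : k q = -1 := hkp1.2
    have hspq : s p - s q = -(2 * π) := by
      have h2 : (2 : ℝ) = (k p : ℝ) - (k q : ℝ) := by rw [hkp, hkq]; norm_num
      have := ht p q
      have := hs q p
      nlinarith
    have htp : t p = s q := by
      have := hk p
      rw [hkp] at this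
      push_cast at this
      linarith
    have htq : t q = s p := by
      have := hk q
      rw [hkq] at this
      push_cast at this
      linarith
    set σ := Equiv.swap p q with hσ
    set s' : Fin n → ℝ := fun m => s (σ m) with hs'
    set k' : Fin n → ℤ := fun m => if m = p then 0 else if m = q then 0 else k m with hk'
    have hms' : Multiset.map s' Finset.univ.val = Multiset.map s Finset.univ.val := by
      rw [hs']
      have : (fun m => s (σ m)) = s ∘ ⇑σ := rfl
      rw [this, ← Multiset.map_map, Multiset.map_univ_val_equiv]
    have hks1 : ∀ j, t j = s' j + 2 * π * ((k' j : ℝ)) := by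
      intro m
      by_cases hmp : m = p
      · subst hmp
        simp [hs', hk', hσ, Equiv.swap_apply_left, htp]
      · by_cases hmq : m = q
        · subst hmq
          simp [hs', hk', hσ, Equiv.swap_apply_right, htq, hmp]
        · have : σ m = m := Equiv.swap_apply_of_ne_of_ne hmp hmq
          simp only [hs', hk', this, if_neg hmp, if_neg hmq]
          exact hk m
    have hsum' : (∑ j, s' j) = ∑ j, t j := by
      rw [hs']
      have : (∑ j, s (σ j)) = ∑ j, s j := Equiv.sum_comp σ s
      rw [this]
      exact hsum
    have hs'sp : ∀ i j, s' i - s' j ≤ 2 * π := fun i j => hs _ _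
    have hlt : (∑ j, (k' j).natAbs) < N := by
      rw [← hN]
      apply Finset.sum_lt_sum
      · intro m _
        by_cases hmp : m = p
        · subst hmp; simp [hk']
        · by_cases hmq : m = q
          · subst hmq; simp [hk', hmp]
          · simp [hk', hmp, hmq]
      · refine ⟨p, Finset.mem_univ _, ?_⟩
        simp [hk']
        omega
    have := IH _ hlt s' t k' hks1 hsum' hs'sp ht rfl
    rw [this, hms']


lemma exp_conj_dm {V : Matrix (Fin n) (Fin n) ℂ} (hV : V * Vᴴ = 1) (t : Fin n → ℝ) :
    NormedSpace.exp (V * dm t * Vᴴ)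
      = V * Matrix.diagonal (fun j => Complex.exp ((t j : ℂ) * Complex.I)) * Vᴴ := by
  rw [exp_conj hV, exp_dm]

lemma exp_periodic (x : ℝ) :
    Complex.exp (((x - 2 * π : ℝ) : ℂ) * Complex.I) = Complex.exp ((x : ℂ) * Complex.I) := by
  push_cast
  rw [sub_mul, Complex.exp_sub, Complex.exp_two_pi_mul_I, div_one]

lemma spread {Q V : Matrix (Fin n) (Fin n) ℂ} (hV : V * Vᴴ = 1) (t : Fin n → ℝ)
    (ht0 : ∑ j, t j = 0)
    (hexp : NormedSpace.exp (V * dm t * Vᴴ) = Q)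
    (hmin : ∀ Z ∈ suSet n, NormedSpace.exp Z = Q → (∑ j, t j ^ 2) ≤ frobSq Z) :
    ∀ i j, t i - t j ≤ 2 * π := by
  intro i j
  have hπ := Real.pi_pos
  by_cases hij : i = j
  · subst hij; simp; positivity
  set δ : Fin n → ℝ := fun m => (if m = i then -(2 * π) else 0) + (if m = j then 2 * π else 0)
    with hδ
  set t' : Fin n → ℝ := fun m => t m + δ m with ht'
  have hδi : δ i = -(2 * π) := by simp [hδ, hij]
  have hδj : δ j = 2 * π := by simp [hδ, Ne.symm hij]
  have hsumδ : ∑ m, δ m = 0 := by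
    rw [hδ, Finset.sum_add_distrib]
    simp [Finset.sum_ite_eq']
  have hsum' : ∑ m, t' m = 0 := by
    rw [ht', Finset.sum_add_distrib, ht0, hsumδ, add_zero]
  have hE : ∀ m, Complex.exp ((t' m : ℂ) * Complex.I)
      = Complex.exp ((t m : ℂ) * Complex.I) := by
    intro m
    by_cases hmi : m = i
    · subst hmi
      have h1 : t' m = t m - 2 * π := by rw [ht']; simp [hδi]; ring
      rw [h1, exp_periodic]
    · by_cases hmj : m = j
      · subst hmj
        have h1 : t' m = t m + 2 * π := by rw [ht']; simp [hδj]
        have h2 : t m = t' m - 2 * π := by rw [h1]; ring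
        rw [h2, exp_periodic]
      · have h1 : t' m = t m := by rw [ht']; simp [hδ, hmi, hmj]
        rw [h1]
  have hZsu : V * dm t' * Vᴴ ∈ suSet n := mem_su hV t' hsum'
  have hZexp : NormedSpace.exp (V * dm t' * Vᴴ) = Q := by
    rw [exp_conj_dm hV, ← hexp, exp_conj_dm hV]
    have hfun : (fun j => Complex.exp ((t' j : ℂ) * Complex.I))
        = fun j => Complex.exp ((t j : ℂ) * Complex.I) := funext hE
    rw [hfun]
  have h1 : (∑ m, t m ^ 2) ≤ ∑ m, t' m ^ 2 := by
    have := hmin _ hZsu hZexp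
    rwa [frobSq_conj_dm hV] at this
  have hc : ∀ m, t' m ^ 2 = t m ^ 2
      + ((if m = i then -(4 * π * t m) + 4 * π ^ 2 else 0)
        + (if m = j then 4 * π * t m + 4 * π ^ 2 else 0)) := by
    intro m
    by_cases hmi : m = i
    · subst hmi
      rw [ht']
      simp [hδi, hij]
      ring
    · by_cases hmj : m = j
      · subst hmj
        rw [ht']
        simp [hδj, hmi]
        ring
      · have h1 : δ m = 0 := by simp [hδ, hmi, hmj]
        rw [ht']
        simp [h1, hmi, hmj]
  have hexpand : (∑ m, t' m ^ 2)
      = (∑ m, t m ^ 2) + ((-(4 * π * t i) + 4 * π ^ 2) + (4 * π * t j + 4 * π ^ 2)) := by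
    calc (∑ m, t' m ^ 2) = ∑ m, (t m ^ 2
        + ((if m = i then -(4 * π * t m) + 4 * π ^ 2 else 0)
          + (if m = j then 4 * π * t m + 4 * π ^ 2 else 0))) :=
          Finset.sum_congr rfl fun m _ => hc m
      _ = (∑ m, t m ^ 2) + ((-(4 * π * t i) + 4 * π ^ 2) + (4 * π * t j + 4 * π ^ 2)) := by
          rw [Finset.sum_add_distrib, Finset.sum_add_distrib]
          simp [Finset.sum_ite_eq']
  rw [hexpand] at h1
  nlinarith


/-- permutation matrix of `τ`. -/
def permMat (τ : Equiv.Perm (Fin n)) : Matrix (Fin n) (Fin n) ℂ :=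
  (1 : Matrix (Fin n) (Fin n) ℂ).submatrix ⇑τ id

lemma permMat_conjTranspose (τ : Equiv.Perm (Fin n)) :
    (permMat τ)ᴴ = (1 : Matrix (Fin n) (Fin n) ℂ).submatrix id ⇑τ := by
  ext i j
  by_cases h : i = τ j
  · simp [permMat, Matrix.conjTranspose_apply, Matrix.one_apply, h]
  · have h2 : ¬ τ j = i := fun h' => absurd h'.symm h
    simp [permMat, Matrix.conjTranspose_apply, Matrix.one_apply, h, h2]

lemma permMat_mul_diag (τ : Equiv.Perm (Fin n)) (d : Fin n → ℂ) :
    permMat τ * Matrix.diagonal d = (Matrix.diagonal d).submatrix ⇑τ id := by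
  have h := Matrix.submatrix_mul_equiv (1 : Matrix (Fin n) (Fin n) ℂ)
    (Matrix.diagonal d) ⇑τ (Equiv.refl (Fin n)) id
  rw [permMat]
  have h1 : (1 : Matrix (Fin n) (Fin n) ℂ).submatrix ⇑τ ⇑(Equiv.refl (Fin n))
      * (Matrix.diagonal d).submatrix ⇑(Equiv.refl (Fin n)) id
      = ((1 : Matrix (Fin n) (Fin n) ℂ) * Matrix.diagonal d).submatrix ⇑τ id := h
  simpa using h1

lemma permMat_conj_diag (τ : Equiv.Perm (Fin n)) (d : Fin n → ℂ) :
    permMat τ * Matrix.diagonal d * (permMat τ)ᴴ = Matrix.diagonal (d ∘ ⇑τ) := by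
  rw [permMat_conjTranspose, permMat_mul_diag]
  have h := Matrix.submatrix_mul_equiv (Matrix.diagonal d)
    (1 : Matrix (Fin n) (Fin n) ℂ) ⇑τ (Equiv.refl (Fin n)) ⇑τ
  have h2 : (Matrix.diagonal d).submatrix ⇑τ id
      * (1 : Matrix (Fin n) (Fin n) ℂ).submatrix id ⇑τ
      = (Matrix.diagonal d * 1).submatrix ⇑τ ⇑τ := by
    simpa using h
  rw [h2, mul_one, Matrix.submatrix_diagonal_equiv]

lemma permMat_unitary (τ : Equiv.Perm (Fin n)) : permMat τ * (permMat τ)ᴴ = 1 := by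
  have := permMat_conj_diag τ (fun _ => (1 : ℂ))
  simpa [Matrix.diagonal_one, Function.comp_def] using this


lemma frobSq_conj {V : Matrix (Fin n) (Fin n) ℂ} (hV : V * Vᴴ = 1)
    (A : Matrix (Fin n) (Fin n) ℂ) : frobSq (V * A * Vᴴ) = frobSq A := by
  have hV' : Vᴴ * V = 1 := mul_eq_one_comm.mp hV
  unfold frobSq
  rw [conjT_conj, conj_mul hV', trace_conj hV']

end Stmt14

/-- if `ζ(Q) ≥ 0` and `X₀ ∈ Θ(Q)`, then `Θ(Q)` is the orbit of `X₀`
under conjugation by unitary matrices commuting with `Q`. -/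
theorem stmt_14 (n : ℕ) (hn : 2 ≤ n) (Q : Matrix (Fin n) (Fin n) ℂ)
    (hQ : Q ∈ SpecialUnitary n) (μ : Fin n → ℂ)
    (hμ : Q.charpoly.roots = Multiset.map μ Finset.univ.val)
    (hζ : 0 ≤ ∑ j, (μ j).arg)
    (X₀ : Matrix (Fin n) (Fin n) ℂ) (hX₀ : X₀ ∈ ThetaQ Q) :
    ThetaQ Q = {Y | ∃ U : Matrix (Fin n) (Fin n) ℂ,
      U * Uᴴ = 1 ∧ U * Q = Q * U ∧ Y = U * X₀ * Uᴴ} := by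
  obtain ⟨hX₀su, hX₀exp, hX₀frob⟩ := hX₀
  have hbdd : BddBelow {r : ℝ | ∃ X ∈ suSet n, NormedSpace.exp X = Q ∧ frobSq X = r} := by
    refine ⟨0, fun r hr => ?_⟩
    obtain ⟨X, -, -, hXr⟩ := hr
    rw [← hXr]
    exact Stmt14.frobSq_nonneg X
  have hmin : ∀ Z ∈ suSet n, NormedSpace.exp Z = Q → mQ Q ≤ frobSq Z := by
    intro Z hZ hZe
    exact csInf_le hbdd ⟨Z, hZ, hZe, rfl⟩
  ext Y
  simp only [Set.mem_setOf_eq]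
  constructor
  · rintro ⟨hYsu, hYexp, hYfrob⟩
    obtain ⟨V, θ, hV, hθ0, hX₀dec⟩ := Stmt14.skew_decomp X₀ hX₀su
    obtain ⟨W, φ, hW, hφ0, hYdec⟩ := Stmt14.skew_decomp Y hYsu
    have hV' : Vᴴ * V = 1 := mul_eq_one_comm.mp hV
    have hW' : Wᴴ * W = 1 := mul_eq_one_comm.mp hW
    have hQV : Q = V * Matrix.diagonal (fun j => Complex.exp ((θ j : ℂ) * Complex.I)) * Vᴴ := by
      rw [← hX₀exp, hX₀dec, Stmt14.exp_conj_dm hV]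
    have hQW : Q = W * Matrix.diagonal (fun j => Complex.exp ((φ j : ℂ) * Complex.I)) * Wᴴ := by
      rw [← hYexp, hYdec, Stmt14.exp_conj_dm hW]
    have hminθ : ∀ Z ∈ suSet n, NormedSpace.exp Z = Q → (∑ j, θ j ^ 2) ≤ frobSq Z := by
      intro Z hZ hZe
      have h := hmin Z hZ hZe
      rw [← hX₀frob, hX₀dec, Stmt14.frobSq_conj_dm hV] at h
      exact h
    have hminφ : ∀ Z ∈ suSet n, NormedSpace.exp Z = Q → (∑ j, φ j ^ 2) ≤ frobSq Z := by
      intro Z hZ hZe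
      have h := hmin Z hZ hZe
      rw [← hYfrob, hYdec, Stmt14.frobSq_conj_dm hW] at h
      exact h
    have hexpθ : NormedSpace.exp (V * Stmt14.dm θ * Vᴴ) = Q := by rw [← hX₀dec]; exact hX₀exp
    have hexpφ : NormedSpace.exp (W * Stmt14.dm φ * Wᴴ) = Q := by rw [← hYdec]; exact hYexp
    have hsθ : ∀ i j, θ i - θ j ≤ 2 * π := Stmt14.spread hV θ hθ0 hexpθ hminθ
    have hsφ : ∀ i j, φ i - φ j ≤ 2 * π := Stmt14.spread hW φ hφ0 hexpφ hminφ
    have hroots1 : Q.charpoly.roots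
        = Multiset.map (fun j => Complex.exp ((θ j : ℂ) * Complex.I)) Finset.univ.val := by
      rw [hQV]
      exact Stmt14.roots_conj_diag hV _
    have hroots2 : Q.charpoly.roots
        = Multiset.map (fun j => Complex.exp ((φ j : ℂ) * Complex.I)) Finset.univ.val := by
      rw [hQW]
      exact Stmt14.roots_conj_diag hW _
    have hmm : Multiset.map (fun j => Complex.exp ((θ j : ℂ) * Complex.I)) Finset.univ.val
        = Multiset.map (fun j => Complex.exp ((φ j : ℂ) * Complex.I)) Finset.univ.val := by
      rw [← hroots1]
      exact hroots2
    obtain ⟨σ, hσ⟩ := Stmt14.exists_perm _ _ hmm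
    have hcong : ∀ j, ∃ m : ℤ, φ (σ j) = θ j + 2 * π * (m : ℝ) := by
      intro j
      have h := hσ j
      rw [Complex.exp_eq_exp_iff_exists_int] at h
      obtain ⟨m, hm⟩ := h
      refine ⟨m, ?_⟩
      have h2 : ((φ (σ j) : ℝ) : ℂ) * Complex.I = ((θ j + 2 * π * (m : ℝ) : ℝ) : ℂ) * Complex.I := by
        rw [hm]
        push_cast
        ring
      have h3 := mul_right_cancel₀ Complex.I_ne_zero h2
      exact_mod_cast h3
    choose k hk using hcong
    have hsum' : (∑ j, θ j) = ∑ j, φ (σ j) := by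
      rw [hθ0, Equiv.sum_comp σ φ, hφ0]
    have hsφ' : ∀ i j, φ (σ i) - φ (σ j) ≤ 2 * π := fun i j => hsφ _ _
    have hkey := Stmt14.key (∑ j, (k j).natAbs) θ (fun j => φ (σ j)) k hk hsum' hsθ hsφ' rfl
    have hmφ : Multiset.map (fun j => φ (σ j)) Finset.univ.val
        = Multiset.map φ Finset.univ.val := by
      show Multiset.map (φ ∘ ⇑σ) _ = _
      rw [← Multiset.map_map, Multiset.map_univ_val_equiv]
    have hmθφ : Multiset.map θ Finset.univ.val = Multiset.map φ Finset.univ.val := by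
      rw [← hkey]
      exact hmφ
    obtain ⟨τ, hτ⟩ := Stmt14.exists_perm θ φ hmθφ
    set P := Stmt14.permMat τ with hP
    set U := W * Pᴴ * Vᴴ with hU
    have hPP : P * Pᴴ = 1 := Stmt14.permMat_unitary τ
    have hPP' : Pᴴ * P = 1 := mul_eq_one_comm.mp hPP
    have cancV : ∀ x : Matrix (Fin n) (Fin n) ℂ, Vᴴ * (V * x) = x := fun x => by
      rw [← mul_assoc, hV', one_mul]
    have cancP : ∀ x : Matrix (Fin n) (Fin n) ℂ, Pᴴ * (P * x) = x := fun x => by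
      rw [← mul_assoc, hPP', one_mul]
    have hUct : Uᴴ = V * (P * Wᴴ) := by
      rw [hU]
      simp only [Matrix.conjTranspose_mul, Matrix.conjTranspose_conjTranspose]
    have hPdφ : P * Stmt14.dm φ * Pᴴ = Stmt14.dm θ := by
      have h := Stmt14.permMat_conj_diag τ (fun j => (φ j : ℂ) * Complex.I)
      show P * Matrix.diagonal (fun j => (φ j : ℂ) * Complex.I) * Pᴴ
        = Matrix.diagonal (fun j => (θ j : ℂ) * Complex.I)
      rw [h]
      have hfun : ((fun j => (φ j : ℂ) * Complex.I) ∘ ⇑τ) = fun j => (θ j : ℂ) * Complex.I := by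
        funext j
        show (φ (τ j) : ℂ) * Complex.I = _
        rw [hτ j]
      rw [hfun]
    have hPDφ : P * Matrix.diagonal (fun j => Complex.exp ((φ j : ℂ) * Complex.I)) * Pᴴ
        = Matrix.diagonal (fun j => Complex.exp ((θ j : ℂ) * Complex.I)) := by
      have h := Stmt14.permMat_conj_diag τ (fun j => Complex.exp ((φ j : ℂ) * Complex.I))
      rw [h]
      have hfun : ((fun j => Complex.exp ((φ j : ℂ) * Complex.I)) ∘ ⇑τ)
          = fun j => Complex.exp ((θ j : ℂ) * Complex.I) := by
        funext j
        show Complex.exp ((φ (τ j) : ℂ) * Complex.I) = _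
        rw [hτ j]
      rw [hfun]
    have m1 : Pᴴ * Stmt14.dm θ * P = Stmt14.dm φ := by
      rw [← hPdφ]
      calc Pᴴ * (P * Stmt14.dm φ * Pᴴ) * P = Pᴴ * P * Stmt14.dm φ * (Pᴴ * P) := by
            simp only [mul_assoc]
        _ = Stmt14.dm φ := by rw [hPP']; simp
    have m2 : Pᴴ * Matrix.diagonal (fun j => Complex.exp ((θ j : ℂ) * Complex.I)) * P
        = Matrix.diagonal (fun j => Complex.exp ((φ j : ℂ) * Complex.I)) := by
      rw [← hPDφ]
      calc Pᴴ * (P * Matrix.diagonal (fun j => Complex.exp ((φ j : ℂ) * Complex.I)) * Pᴴ) * P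
          = Pᴴ * P * Matrix.diagonal (fun j => Complex.exp ((φ j : ℂ) * Complex.I)) * (Pᴴ * P) := by
            simp only [mul_assoc]
        _ = Matrix.diagonal (fun j => Complex.exp ((φ j : ℂ) * Complex.I)) := by rw [hPP']; simp
    have conjU : ∀ Aθ Aφ : Matrix (Fin n) (Fin n) ℂ, Pᴴ * Aθ * P = Aφ →
        U * (V * Aθ * Vᴴ) * Uᴴ = W * Aφ * Wᴴ := by
      intro Aθ Aφ hA
      rw [hU, hUct, ← hA]
      simp only [mul_assoc]
      rw [cancV, cancV]
    have hUU : U * Uᴴ = 1 := by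
      rw [hU, hUct]
      simp only [mul_assoc]
      rw [cancV, cancP]
      exact hW
    have hUU' : Uᴴ * U = 1 := mul_eq_one_comm.mp hUU
    have hQcons : U * Q * Uᴴ = Q := by
      have h := conjU _ _ m2
      rw [← hQV, ← hQW] at h
      exact h
    have hUQ : U * Q = Q * U := by
      calc U * Q = U * Q * 1 := (mul_one _).symm
        _ = U * Q * (Uᴴ * U) := by rw [hUU']
        _ = (U * Q * Uᴴ) * U := by simp only [mul_assoc]
        _ = Q * U := by rw [hQcons]
    have hYeq : Y = U * X₀ * Uᴴ := by
      have h := conjU _ _ m1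
      rw [← hX₀dec, ← hYdec] at h
      exact h.symm
    exact ⟨U, hUU, hUQ, hYeq⟩
  · rintro ⟨U, hUU, hUQ, rfl⟩
    have hUU' : Uᴴ * U = 1 := mul_eq_one_comm.mp hUU
    refine ⟨⟨?_, ?_⟩, ?_, ?_⟩
    · rw [Stmt14.conjT_conj, hX₀su.1]
      simp [Matrix.mul_neg, Matrix.neg_mul]
    · rw [Stmt14.trace_conj hUU', hX₀su.2]
    · rw [Stmt14.exp_conj hUU, hX₀exp, hUQ, mul_assoc, hUU, mul_one]
    · rw [Stmt14.frobSq_conj hUU, hX₀frob]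
end
end
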